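/- arXiv:2306.13403 — 4 statements merged into one kernel-verified Lean document; each statement's English description precedes it below -/
import Mathlib

section
/- Let G be an abelian group and let A be a finite non-empty subset of G. Then |A|^3 / E[A] ≤ σ_ent[A] ≤ σ[A], where σ[A] = |A+A|/|A| is the doubling constant, E[A] = #{(a1,a2,a3,a4) ∈ A^4 : a1 + a2 = a3 + a4} is the additive energy, and σ_ent[A] is the entropic doubling constant of the uniform distribution on A. -/
open Finset
open scoped Pointwise

noncomputable section

/-- `IsPMF p`: the finitely supported function `p` is a probability mass function,
modelling the distribution of a random variable taking values in a finite subset. -/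
def IsPMF {G : Type*} (p : G →₀ ℝ) : Prop :=
  (∀ x, 0 ≤ p x) ∧ ∑ x ∈ p.support, p x = 1

/-- Shannon entropy `H(X)` of a random variable with distribution `p`. -/
def ent {G : Type*} (p : G →₀ ℝ) : ℝ :=
  ∑ x ∈ p.support, Real.negMulLog (p x)

/-- The joint distribution of a pair of independent random variables with
distributions `p` and `q`. -/
def prodPMF {G H : Type*} (p : G →₀ ℝ) (q : H →₀ ℝ) : (G × H) →₀ ℝ :=
  Finsupp.onFinset (p.support ×ˢ q.support) (fun z => p z.1 * q z.2)
    (fun _z hz => Finset.mem_product.2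
      ⟨Finsupp.mem_support_iff.2 (left_ne_zero_of_mul hz),
       Finsupp.mem_support_iff.2 (right_ne_zero_of_mul hz)⟩)

/-- The distribution of `X - Y`, where `X, Y` are independent with distributions `p, q`. -/
def subDist {G : Type*} [AddCommGroup G] (p q : G →₀ ℝ) : G →₀ ℝ :=
  Finsupp.mapDomain (fun z : G × G => z.1 - z.2) (prodPMF p q)

/-- The distribution of `X + Y`, where `X, Y` are independent with distributions `p, q`. -/
def sumDist {G : Type*} [AddCommGroup G] (p q : G →₀ ℝ) : G →₀ ℝ :=
  Finsupp.mapDomain (fun z : G × G => z.1 + z.2) (prodPMF p q)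

/-- The entropic Ruzsa distance `d_ent(X, Y) = H(X' - Y') - H(X)/2 - H(Y)/2`,
where `X', Y'` are independent copies of `X ~ p`, `Y ~ q`. -/
def dEnt {G : Type*} [AddCommGroup G] (p q : G →₀ ℝ) : ℝ :=
  ent (subDist p q) - ent p / 2 - ent q / 2

/-- The entropic doubling constant `σ_ent[X] = exp(H(X₁ + X₂) - H(X))`
for independent copies `X₁, X₂` of `X ~ p`. -/
def sigmaEnt {G : Type*} [AddCommGroup G] (p : G →₀ ℝ) : ℝ :=
  Real.exp (ent (sumDist p p) - ent p)

/-- First marginal of a joint distribution on `G × H`. -/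
def fstMarg {G H : Type*} (w : (G × H) →₀ ℝ) : G →₀ ℝ :=
  Finsupp.mapDomain Prod.fst w

/-- Second marginal of a joint distribution on `G × H`. -/
def sndMarg {G H : Type*} (w : (G × H) →₀ ℝ) : H →₀ ℝ :=
  Finsupp.mapDomain Prod.snd w

/-- The maximal entropic Ruzsa distance `d*_ent(X, Y)`: the supremum of
`H(X' - Y') - H(X)/2 - H(Y)/2` over all couplings `(X', Y')` of `X ~ p` and `Y ~ q`. -/
def dEntStar {G : Type*} [AddCommGroup G] (p q : G →₀ ℝ) : ℝ :=
  sSup { d : ℝ | ∃ w : (G × G) →₀ ℝ, IsPMF w ∧ fstMarg w = p ∧ sndMarg w = q ∧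
    d = ent (Finsupp.mapDomain (fun z : G × G => z.1 - z.2) w) - ent p / 2 - ent q / 2 }

/-- The uniform distribution on a finite set `A`. -/
def unif {G : Type*} [DecidableEq G] (A : Finset G) : G →₀ ℝ :=
  Finsupp.onFinset A (fun x => if x ∈ A then ((A.card : ℝ))⁻¹ else 0)
    (fun x hx => by by_contra h; exact hx (if_neg h))

/-- The distribution of `X` conditioned on the event `π(X) = y`, where `X ~ p`. -/
def condFiber {G H : Type*} [DecidableEq H] (π : G → H) (y : H) (p : G →₀ ℝ) : G →₀ ℝ :=
  Finsupp.onFinset p.support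
    (fun x => if π x = y then p x / (Finsupp.mapDomain π p) y else 0)
    (fun x hx => Finsupp.mem_support_iff.2 (fun h0 => hx (by (try simp only []); split_ifs <;> simp [h0])))

/-- The entropy `h(p)` of the Bernoulli distribution with parameter `p`. -/
def binEnt (p : ℝ) : ℝ := Real.negMulLog p + Real.negMulLog (1 - p)

/-- Skew-dimension bound: `skewDimLE A r` means the skew-dimension of `A ⊆ ℤ^D`
is at most `r`. -/
def skewDimLE {D : ℕ} : Finset (Fin D → ℤ) → ℕ → Prop
  | A, 0 => A.card ≤ 1
  | A, r + 1 => A.card ≤ 1 ∨ ∃ i : Fin D, ∀ n : ℤ,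
      skewDimLE (A.filter fun v => v i = n) r

/-- The (affine) dimension of a finite subset `A ⊆ ℤ^D`: the dimension of the
real span of `A - A`. -/
def dimAff {D : ℕ} (A : Finset (Fin D → ℤ)) : ℕ :=
  Module.finrank ℝ (Submodule.span ℝ
    { x : Fin D → ℝ | ∃ a ∈ A, ∃ b ∈ A, x = fun i => ((a i : ℝ) - (b i : ℝ)) })


lemma jensen_log {α : Type*} (s : Finset α) (w z : α → ℝ)
    (hw : ∀ i ∈ s, 0 ≤ w i) (hw1 : ∑ i ∈ s, w i = 1)
    (hz : ∀ i ∈ s, 0 < z i) :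
    ∑ i ∈ s, w i * Real.log (z i) ≤ Real.log (∑ i ∈ s, w i * z i) := by
  have := (strictConcaveOn_log_Ioi.concaveOn).le_map_sum hw hw1
    (fun i hi => Set.mem_Ioi.2 (hz i hi))
  simpa [smul_eq_mul] using this

lemma ent_le_log_card {G : Type*} (p : G →₀ ℝ) (h0 : ∀ x, 0 ≤ p x)
    (h1 : ∑ x ∈ p.support, p x = 1) :
    ent p ≤ Real.log p.support.card := by
  have key := jensen_log p.support (fun x => p x) (fun x => (p x)⁻¹)
    (fun i _ => h0 i) h1
    (fun i hi => inv_pos.2 ((h0 i).lt_of_ne (Ne.symm (Finsupp.mem_support_iff.1 hi))))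
  have e1 : ∑ x ∈ p.support, p x * (p x)⁻¹ = p.support.card := by
    rw [Finset.sum_congr rfl (fun x hx => mul_inv_cancel₀ (Finsupp.mem_support_iff.1 hx))]
    simp
  have e2 : ent p = ∑ x ∈ p.support, p x * Real.log (p x)⁻¹ := by
    unfold ent
    refine Finset.sum_congr rfl (fun x hx => ?_)
    rw [Real.log_inv, Real.negMulLog]; ring
  rw [e2, ← e1]; exact key

lemma neg_log_le_ent {G : Type*} (p : G →₀ ℝ) (h0 : ∀ x, 0 ≤ p x)
    (h1 : ∑ x ∈ p.support, p x = 1) :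
    -Real.log (∑ x ∈ p.support, p x ^ 2) ≤ ent p := by
  have key := jensen_log p.support (fun x => p x) (fun x => p x)
    (fun i _ => h0 i) h1
    (fun i hi => (h0 i).lt_of_ne (Ne.symm (Finsupp.mem_support_iff.1 hi)))
  have e2 : ent p = -∑ x ∈ p.support, p x * Real.log (p x) := by
    unfold ent
    rw [← Finset.sum_neg_distrib]
    refine Finset.sum_congr rfl (fun x hx => ?_)
    rw [Real.negMulLog]; ring
  rw [e2]
  have : ∑ x ∈ p.support, p x ^ 2 = ∑ x ∈ p.support, p x * p x := by
    refine Finset.sum_congr rfl (fun x hx => sq (p x))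
  rw [this]
  linarith [key]

section Unif
set_option linter.unusedSectionVars false
variable {G : Type*} [AddCommGroup G] [DecidableEq G]

lemma unif_apply (A : Finset G) (x : G) :
    unif A x = if x ∈ A then ((A.card : ℝ))⁻¹ else 0 := rfl

lemma support_unif (A : Finset G) (hA : A.Nonempty) : (unif A).support = A := by
  have hc : ((A.card : ℝ))⁻¹ ≠ 0 := by
    simp [Finset.card_ne_zero_of_mem hA.choose_spec]
  ext x
  simp only [Finsupp.mem_support_iff, unif_apply]
  split_ifs with h <;> simp [h, hc]

lemma sum_unif (A : Finset G) (hA : A.Nonempty) :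
    ∑ x ∈ (unif A).support, unif A x = 1 := by
  rw [support_unif A hA]
  have hc : (A.card : ℝ) ≠ 0 := by
    simp [Finset.card_ne_zero_of_mem hA.choose_spec]
  rw [Finset.sum_congr rfl (fun x hx => by rw [unif_apply, if_pos hx])]
  simp [mul_inv_cancel₀ hc]

lemma ent_unif (A : Finset G) (hA : A.Nonempty) :
    ent (unif A) = Real.log A.card := by
  have hc : (A.card : ℝ) ≠ 0 := by
    simp [Finset.card_ne_zero_of_mem hA.choose_spec]
  unfold ent
  rw [support_unif A hA,
    Finset.sum_congr rfl (fun x hx => by rw [unif_apply, if_pos hx])]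
  rw [Finset.sum_const, Real.negMulLog, Real.log_inv]
  field_simp
  rw [nsmul_eq_mul]; field_simp

lemma support_prodPMF (A : Finset G) (hA : A.Nonempty) :
    (prodPMF (unif A) (unif A)).support = A ×ˢ A := by
  have hc : ((A.card : ℝ))⁻¹ ≠ 0 := by
    simp [Finset.card_ne_zero_of_mem hA.choose_spec]
  ext z
  simp only [Finsupp.mem_support_iff, prodPMF, Finsupp.onFinset_apply, Finset.mem_product]
  rw [unif_apply, unif_apply]
  constructor
  · intro h
    constructor
    · by_contra h1; simp [h1] at h
    · by_contra h2; simp [h2] at h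
  · rintro ⟨h1, h2⟩
    simp [h1, h2, hc]

lemma sumDist_apply (A : Finset G) (hA : A.Nonempty) (x : G) :
    sumDist (unif A) (unif A) x =
      (((A ×ˢ A).filter fun z : G × G => z.1 + z.2 = x).card : ℝ) / (A.card : ℝ) ^ 2 := by
  unfold sumDist Finsupp.mapDomain
  rw [Finsupp.sum_apply, Finsupp.sum, support_prodPMF A hA]
  have : ∀ z ∈ A ×ˢ A,
      Finsupp.single (z.1 + z.2) (prodPMF (unif A) (unif A) z) x
        = if z.1 + z.2 = x then ((A.card : ℝ))⁻¹ * ((A.card : ℝ))⁻¹ else 0 := by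
    intro z hz
    rw [Finset.mem_product] at hz
    rw [Finsupp.single_apply]
    have : prodPMF (unif A) (unif A) z = ((A.card : ℝ))⁻¹ * ((A.card : ℝ))⁻¹ := by
      simp only [prodPMF, Finsupp.onFinset_apply]
      rw [unif_apply, unif_apply, if_pos hz.1, if_pos hz.2]
    rw [this]
  rw [Finset.sum_congr rfl this, ← Finset.sum_filter, Finset.sum_const]
  simp only [nsmul_eq_mul]
  rw [div_eq_mul_inv]
  ring_nf

end Unif

section Energy
variable {G : Type*} [AddCommGroup G] [DecidableEq G]

lemma energy_eq (A : Finset G) :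
    (((A ×ˢ A ×ˢ A ×ˢ A).filter
        (fun x : G × G × G × G => x.1 + x.2.1 = x.2.2.1 + x.2.2.2)).card
      = ∑ s ∈ (A ×ˢ A).image (fun z : G × G => z.1 + z.2),
          ((A ×ˢ A).filter fun z : G × G => z.1 + z.2 = s).card ^ 2) := by
  classical
  set S := (A ×ˢ A).image (fun z : G × G => z.1 + z.2) with hS
  set r : G → ℕ := fun s => ((A ×ˢ A).filter fun z : G × G => z.1 + z.2 = s).card with hr
  have h1 : ∀ s ∈ S, r s ^ 2 = ∑ z ∈ (A ×ˢ A).filter (fun z : G × G => z.1 + z.2 = s), r s := by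
    intro s _
    rw [Finset.sum_const, smul_eq_mul, sq]
  rw [Finset.sum_congr rfl h1]
  have hmaps : ∀ z ∈ A ×ˢ A, z.1 + z.2 ∈ S := fun z hz => Finset.mem_image_of_mem _ hz
  rw [Finset.sum_fiberwise_of_maps_to' hmaps]
  have h2 : ∀ z ∈ A ×ˢ A, r (z.1 + z.2) =
      ∑ w ∈ A ×ˢ A, if w.1 + w.2 = z.1 + z.2 then 1 else 0 := by
    intro z _
    simp only [hr]
    rw [Finset.card_filter]
  rw [Finset.sum_congr rfl h2, Finset.card_filter]
  rw [Finset.sum_product (s := A) (t := A ×ˢ A ×ˢ A)]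
  simp only [Finset.sum_product (s := A)]
  apply Finset.sum_congr rfl; intro a _
  apply Finset.sum_congr rfl; intro b _
  apply Finset.sum_congr rfl; intro c _
  apply Finset.sum_congr rfl; intro d _
  exact if_congr eq_comm rfl rfl

end Energy

/-- For a finite non-empty subset `A` of an abelian group `G`,
`|A|^3 / E[A] ≤ σ_ent[A] ≤ |A+A| / |A|`, where `E[A]` is the additive energy. -/
theorem statement0 {G : Type*} [AddCommGroup G] [DecidableEq G]
    (A : Finset G) (hA : A.Nonempty) :
    (A.card : ℝ) ^ 3 /
        (((A ×ˢ A ×ˢ A ×ˢ A).filter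
          (fun x : G × G × G × G => x.1 + x.2.1 = x.2.2.1 + x.2.2.2)).card : ℝ)
      ≤ sigmaEnt (unif A) ∧
    sigmaEnt (unif A) ≤ ((A + A).card : ℝ) / (A.card : ℝ) := by
  classical
  have hn0 : 0 < A.card := Finset.card_pos.2 hA
  have hnR : (0:ℝ) < A.card := by exact_mod_cast hn0
  set q := sumDist (unif A) (unif A) with hq
  set S := (A ×ˢ A).image (fun z : G × G => z.1 + z.2) with hS
  set r : G → ℕ := fun s => ((A ×ˢ A).filter fun z : G × G => z.1 + z.2 = s).card with hr
  have hSA : S = A + A := Finset.image_add_product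
  have hqx : ∀ x, q x = (r x : ℝ) / (A.card : ℝ) ^ 2 := fun x => sumDist_apply A hA x
  have hq0 : ∀ x, 0 ≤ q x := by
    intro x; rw [hqx]; positivity
  have hsupp : q.support = S := by
    ext x
    simp only [Finsupp.mem_support_iff, hqx, hS, Finset.mem_image]
    rw [div_ne_zero_iff]
    constructor
    · rintro ⟨h, -⟩
      have : ((A ×ˢ A).filter fun z : G × G => z.1 + z.2 = x).Nonempty := by
        rw [← Finset.card_pos]
        exact Nat.pos_of_ne_zero (by exact_mod_cast h)
      obtain ⟨z, hz⟩ := this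
      rw [Finset.mem_filter] at hz
      exact ⟨z, hz.1, hz.2⟩
    · rintro ⟨z, hz, hzx⟩
      refine ⟨?_, by positivity⟩
      have : 0 < r x := Finset.card_pos.2 ⟨z, Finset.mem_filter.2 ⟨hz, hzx⟩⟩
      exact_mod_cast this.ne'
  have hrsum : ∑ x ∈ S, (r x : ℝ) = (A.card : ℝ) ^ 2 := by
    have := Finset.card_eq_sum_card_fiberwise
      (f := fun z : G × G => z.1 + z.2) (s := A ×ˢ A) (t := S)
      (fun z hz => Finset.mem_image_of_mem _ hz)
    have h2 : ((A ×ˢ A).card : ℝ) = ∑ x ∈ S, (r x : ℝ) := by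
      exact_mod_cast congrArg (Nat.cast : ℕ → ℝ) this
    rw [← h2, Finset.card_product]
    push_cast
    ring
  have hsum1 : ∑ x ∈ q.support, q x = 1 := by
    rw [hsupp, Finset.sum_congr rfl (fun x _ => hqx x), ← Finset.sum_div, hrsum]
    field_simp
  set E := ((A ×ˢ A ×ˢ A ×ˢ A).filter
      (fun x : G × G × G × G => x.1 + x.2.1 = x.2.2.1 + x.2.2.2)).card with hE
  have hE0 : 0 < E := by
    obtain ⟨a, ha⟩ := hA
    refine Finset.card_pos.2 ⟨(a, a, a, a), Finset.mem_filter.2 ⟨?_, rfl⟩⟩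
    simp [Finset.mem_product, ha]
  have hER : (0:ℝ) < E := by exact_mod_cast hE0
  have hsumsq : ∑ x ∈ q.support, q x ^ 2 = (E : ℝ) / (A.card : ℝ) ^ 4 := by
    rw [hsupp, Finset.sum_congr rfl (fun x _ => by rw [hqx, div_pow])]
    rw [← Finset.sum_div]
    have h4 : ((A.card : ℝ) ^ 2) ^ 2 = (A.card : ℝ) ^ 4 := by ring
    rw [h4]
    congr 1
    have := energy_eq A
    rw [← hE] at this
    exact_mod_cast this.symm
  have hsig : sigmaEnt (unif A) = Real.exp (ent q - Real.log A.card) := by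
    rw [sigmaEnt, ent_unif A hA, hq]
  constructor
  · -- lower bound
    have hent : -Real.log ((E : ℝ) / (A.card : ℝ) ^ 4) ≤ ent q := by
      rw [← hsumsq]; exact neg_log_le_ent q hq0 hsum1
    have hlog : -Real.log ((E : ℝ) / (A.card : ℝ) ^ 4)
        = 4 * Real.log A.card - Real.log E := by
      rw [Real.log_div hER.ne' (by positivity), Real.log_pow]
      push_cast
      ring
    have key : 3 * Real.log A.card - Real.log E ≤ ent q - Real.log A.card := by
      rw [hlog] at hent; linarith
    have h3 : (3:ℝ) * Real.log A.card = Real.log ((A.card : ℝ) ^ 3) := by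
      rw [Real.log_pow]; norm_num
    have hval : (A.card : ℝ) ^ 3 / (E : ℝ)
        = Real.exp (3 * Real.log A.card - Real.log E) := by
      rw [h3, Real.exp_sub, Real.exp_log (pow_pos hnR 3), Real.exp_log hER]
    rw [hsig, hval]
    exact Real.exp_le_exp.2 key
  · -- upper bound
    have hcard : (q.support.card : ℝ) = ((A + A).card : ℝ) := by
      rw [hsupp, hSA]
    have hent : ent q ≤ Real.log ((A + A).card) := by
      have := ent_le_log_card q hq0 hsum1
      rwa [hcard] at this
    have hAA : (0:ℝ) < ((A + A).card : ℝ) := by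
      have : (A + A).Nonempty := hA.add hA
      exact_mod_cast Finset.card_pos.2 this
    rw [hsig]
    calc Real.exp (ent q - Real.log A.card)
        ≤ Real.exp (Real.log ((A + A).card) - Real.log A.card) := by
          exact Real.exp_le_exp.2 (by linarith)
      _ = ((A + A).card : ℝ) / (A.card : ℝ) := by
          rw [Real.exp_sub, Real.exp_log hAA, Real.exp_log hnR]

end
end

section
/- Let G be an abelian group and let X, Y, Z be random variables taking values in finite subsets of G. Then d*_ent(X, Z) ≤ d_ent(X, Y) + d_ent(Y, Z). -/
open Finset

noncomputable section

section AuxLemmas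

open Finsupp

variable {α β γ δ : Type*}

private lemma mapDomain_apply_sum [DecidableEq β] (f : α → β) (p : α →₀ ℝ) {s : Finset α}
    (hs : p.support ⊆ s) (y : β) :
    Finsupp.mapDomain f p y = ∑ x ∈ s, if f x = y then p x else 0 := by
  classical
  rw [Finsupp.mapDomain, Finsupp.sum_apply, Finsupp.sum]
  rw [Finset.sum_congr rfl (fun x _ => Finsupp.single_apply)]
  exact Finset.sum_subset hs (fun x _ hx => by
    simp [Finsupp.notMem_support_iff.mp hx])

private lemma mapDomain_nonneg (f : α → β) (p : α →₀ ℝ) (hp : ∀ x, 0 ≤ p x) (y : β) :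
    0 ≤ Finsupp.mapDomain f p y := by
  classical
  rw [mapDomain_apply_sum f p subset_rfl y]
  exact Finset.sum_nonneg fun x _ => by split <;> [exact hp x; exact le_rfl]

private lemma le_mapDomain (f : α → β) (p : α →₀ ℝ) (hp : ∀ x, 0 ≤ p x) (x : α) :
    p x ≤ Finsupp.mapDomain f p (f x) := by
  classical
  by_cases hx : x ∈ p.support
  · rw [mapDomain_apply_sum f p subset_rfl (f x)]
    have h := Finset.single_le_sum (f := fun z => if f z = f x then p z else 0)
      (fun i _ => by split <;> [exact hp i; exact le_rfl]) hx
    simpa using h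
  · rw [Finsupp.notMem_support_iff.mp hx]
    exact mapDomain_nonneg f p hp _

private lemma isPMF_mapDomain {f : α → β} {p : α →₀ ℝ} (hp : IsPMF p) :
    IsPMF (Finsupp.mapDomain f p) := by
  refine ⟨fun y => mapDomain_nonneg f p hp.1 y, ?_⟩
  have h := Finsupp.sum_mapDomain_index (f := f) (s := p) (h := fun _ v => v)
    (fun a => rfl) (fun a b₁ b₂ => rfl)
  rw [Finsupp.sum, Finsupp.sum] at h
  rw [h, hp.2]

private lemma ent_eq_sum_of_subset (p : α →₀ ℝ) {s : Finset α} (hs : p.support ⊆ s) :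
    ent p = ∑ x ∈ s, Real.negMulLog (p x) :=
  Finset.sum_subset hs (fun x _ hx => by
    rw [Finsupp.notMem_support_iff.mp hx, Real.negMulLog_zero])

private lemma ent_mapDomain_of_injective {f : α → β} (hf : Function.Injective f) (p : α →₀ ℝ) :
    ent (Finsupp.mapDomain f p) = ent p := by
  classical
  rw [ent, ent, Finsupp.mapDomain_support_of_injective hf,
    Finset.sum_image (fun a _ b _ h => hf h)]
  exact Finset.sum_congr rfl fun x _ => by rw [Finsupp.mapDomain_apply hf]

private lemma prodPMF_apply (p : α →₀ ℝ) (q : β →₀ ℝ) (z : α × β) :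
    prodPMF p q z = p z.1 * q z.2 := rfl

private lemma support_prodPMF_s1 (p : α →₀ ℝ) (q : β →₀ ℝ) :
    (prodPMF p q).support = p.support ×ˢ q.support := by
  ext ⟨a, b⟩
  simp [prodPMF, Finsupp.mem_support_iff, mul_ne_zero_iff]

private lemma isPMF_prodPMF {p : α →₀ ℝ} {q : β →₀ ℝ} (hp : IsPMF p) (hq : IsPMF q) :
    IsPMF (prodPMF p q) := by
  constructor
  · intro z; exact mul_nonneg (hp.1 _) (hq.1 _)
  · rw [support_prodPMF_s1, Finset.sum_product]
    simp only [prodPMF_apply]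
    rw [← hp.2]
    refine Finset.sum_congr rfl fun a _ => ?_
    rw [← Finset.mul_sum, hq.2, mul_one]

private lemma ent_prodPMF' {p : α →₀ ℝ} {q : β →₀ ℝ} (hp : IsPMF p) (hq : IsPMF q) :
    ent (prodPMF p q) = ent p + ent q := by
  rw [ent, support_prodPMF_s1, Finset.sum_product]
  simp only [prodPMF_apply, Real.negMulLog_mul]
  calc ∑ a ∈ p.support, ∑ b ∈ q.support,
        (q b * Real.negMulLog (p a) + p a * Real.negMulLog (q b))
      = ∑ a ∈ p.support, ((∑ b ∈ q.support, q b) * Real.negMulLog (p a)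
          + p a * ∑ b ∈ q.support, Real.negMulLog (q b)) := by
        refine Finset.sum_congr rfl fun a _ => ?_
        rw [Finset.sum_add_distrib, Finset.sum_mul, Finset.mul_sum]
    _ = ent p + ent q := by
        simp only [hq.2, one_mul]
        rw [Finset.sum_add_distrib, ← Finset.sum_mul, hp.2, one_mul, ent, ent]

private lemma mapDomain_prodMap_left (f : α → γ) (p : α →₀ ℝ) (q : β →₀ ℝ) :
    Finsupp.mapDomain (Prod.map f id) (prodPMF p q) = prodPMF (Finsupp.mapDomain f p) q := by
  classical
  ext ⟨c, b⟩
  have hsupp : (prodPMF p q).support ⊆ p.support ×ˢ q.support := by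
    rw [support_prodPMF_s1]
  rw [mapDomain_apply_sum _ _ hsupp (c, b), Finset.sum_product]
  rw [prodPMF_apply]
  rw [mapDomain_apply_sum f p subset_rfl c, Finset.sum_mul]
  refine Finset.sum_congr rfl fun a _ => ?_
  simp only [Prod.map, id, Prod.mk.injEq, ite_and, prodPMF_apply]
  by_cases hfa : f a = c
  · simp only [hfa, if_true]
    rw [Finset.sum_ite_eq' q.support b (fun b' => p a * q b')]
    by_cases hb : b ∈ q.support
    · simp [hb]
    · simp [hb, Finsupp.notMem_support_iff.mp hb]
  · simp [hfa]

private lemma mapDomain_swap_prodPMF (p : α →₀ ℝ) (q : β →₀ ℝ) :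
    Finsupp.mapDomain Prod.swap (prodPMF p q) = prodPMF q p := by
  ext z
  have hz : z = Prod.swap (z.2, z.1) := rfl
  rw [hz, Finsupp.mapDomain_apply Prod.swap_injective]
  simp [prodPMF_apply, mul_comm]

private lemma mapDomain_fst_prodPMF (p : α →₀ ℝ) {q : β →₀ ℝ} (hq : IsPMF q) :
    Finsupp.mapDomain Prod.fst (prodPMF p q) = p := by
  classical
  ext a
  have hsupp : (prodPMF p q).support ⊆ p.support ×ˢ q.support := by
    rw [support_prodPMF_s1]
  rw [mapDomain_apply_sum _ _ hsupp a, Finset.sum_product]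
  have h1 : ∀ x ∈ p.support, (∑ b ∈ q.support, if (x, b).1 = a then prodPMF p q (x, b) else 0)
      = if x = a then p x else 0 := by
    intro x _
    by_cases hx : x = a
    · simp only [hx, if_true, prodPMF_apply]
      rw [← Finset.mul_sum, hq.2, mul_one]
    · simp [hx]
  rw [Finset.sum_congr rfl h1, Finset.sum_ite_eq' p.support a p]
  by_cases ha : a ∈ p.support
  · simp [ha]
  · simp [ha, Finsupp.notMem_support_iff.mp ha]

private lemma mapDomain_snd_prodPMF {p : α →₀ ℝ} (hp : IsPMF p) (q : β →₀ ℝ) :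
    Finsupp.mapDomain Prod.snd (prodPMF p q) = q := by
  have h : (Prod.snd : α × β → β) = Prod.fst ∘ Prod.swap := rfl
  rw [h, Finsupp.mapDomain_comp, mapDomain_swap_prodPMF, mapDomain_fst_prodPMF q hp]

/-- Gibbs' inequality core. -/
private lemma gibbs {ι : Type*} {s : Finset ι} {p q : ι → ℝ} (hp : ∀ i ∈ s, 0 < p i)
    (hq : ∀ i ∈ s, 0 < q i) (hpq : ∑ i ∈ s, q i ≤ ∑ i ∈ s, p i) :
    ∑ i ∈ s, p i * Real.log (q i) ≤ ∑ i ∈ s, p i * Real.log (p i) := by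
  have key : ∀ i ∈ s, p i * Real.log (q i) - p i * Real.log (p i) ≤ q i - p i := by
    intro i hi
    have hpi := hp i hi
    have hqi := hq i hi
    have h1 : Real.log (q i / p i) ≤ q i / p i - 1 :=
      Real.log_le_sub_one_of_pos (by positivity)
    have h2 : Real.log (q i / p i) = Real.log (q i) - Real.log (p i) :=
      Real.log_div (ne_of_gt hqi) (ne_of_gt hpi)
    have h3 := mul_le_mul_of_nonneg_left h1 (le_of_lt hpi)
    rw [h2, mul_sub, mul_sub, mul_div_cancel₀ _ (ne_of_gt hpi), mul_one] at h3
    linarith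
  have h := Finset.sum_le_sum key
  rw [Finset.sum_sub_distrib, Finset.sum_sub_distrib] at h
  linarith

/-- Entropy of a pushforward, as a sum over the source support. -/
private lemma ent_mapDomain_eq (f : α → β) (p : α →₀ ℝ) (hp0 : ∀ x, 0 ≤ p x) :
    ent (Finsupp.mapDomain f p) =
      - ∑ x ∈ p.support, p x * Real.log (Finsupp.mapDomain f p (f x)) := by
  classical
  set m := Finsupp.mapDomain f p with hm
  have hpos : ∀ x ∈ p.support, 0 < p x := fun x hx =>
    lt_of_le_of_ne (hp0 x) (Ne.symm (Finsupp.mem_support_iff.mp hx))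
  have hmaps : ∀ x ∈ p.support, f x ∈ m.support := by
    intro x hx
    rw [Finsupp.mem_support_iff]
    have h1 := hpos x hx
    have h2 := le_mapDomain f p hp0 x
    exact ne_of_gt (lt_of_lt_of_le h1 h2)
  have key : ∀ y ∈ m.support, Real.negMulLog (m y)
      = ∑ x ∈ p.support.filter (fun x => f x = y), p x * (- Real.log (m (f x))) := by
    intro y _
    have hmy : m y = ∑ x ∈ p.support.filter (fun x => f x = y), p x := by
      rw [hm, mapDomain_apply_sum f p subset_rfl y, Finset.sum_filter]
    have : ∀ x ∈ p.support.filter (fun x => f x = y),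
        p x * (- Real.log (m (f x))) = p x * (- Real.log (m y)) := by
      intro x hx
      rw [(Finset.mem_filter.mp hx).2]
    rw [Finset.sum_congr rfl this, ← Finset.sum_mul, ← hmy, Real.negMulLog_def]
    ring
  rw [ent, Finset.sum_congr rfl key,
    Finset.sum_fiberwise_of_maps_to hmaps (fun x => p x * (- Real.log (m (f x))))]
  simp [mul_comm]

private lemma ent_eq_neg_sum (p : α →₀ ℝ) :
    ent p = - ∑ x ∈ p.support, p x * Real.log (p x) := by
  rw [ent, ← Finset.sum_neg_distrib]
  exact Finset.sum_congr rfl fun x _ => by rw [Real.negMulLog_def]; ring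
private lemma sum_fiber_le (m : (α × γ) →₀ ℝ) (hm : ∀ x, 0 ≤ m x) (A : Finset α) (c : γ) :
    ∑ a ∈ A, m (a, c) ≤ Finsupp.mapDomain Prod.snd m c := by
  classical
  rw [mapDomain_apply_sum Prod.snd m subset_rfl c]
  set g : α × γ → ℝ := fun x => if x.2 = c then m x else 0 with hg
  have hgnn : ∀ x, 0 ≤ g x := fun x => by rw [hg]; dsimp only; split <;> [exact hm x; exact le_rfl]
  have h0 : ∑ a ∈ A, m (a, c) = ∑ x ∈ A.image (fun a => (a, c)), g x := by
    rw [Finset.sum_image (fun a _ b _ h => (Prod.mk.injEq _ _ _ _ ▸ h : _ ∧ _).1)]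
    simp [hg]
  rw [h0]
  have h1 : ∑ x ∈ A.image (fun a => (a, c)), g x
      ≤ ∑ x ∈ A.image (fun a => (a, c)) ∪ m.support, g x :=
    Finset.sum_le_sum_of_subset_of_nonneg Finset.subset_union_left
      (fun x _ _ => hgnn x)
  have h2 : ∑ x ∈ m.support, g x = ∑ x ∈ A.image (fun a => (a, c)) ∪ m.support, g x :=
    Finset.sum_subset Finset.subset_union_right (fun x _ hx => by
      rw [hg]; dsimp only; rw [Finsupp.notMem_support_iff.mp hx]; simp)
  rw [h2]
  exact h1

/-- Subadditivity of entropy. -/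
private lemma ent_le_add_marginals (w : (α × β) →₀ ℝ) (hw : IsPMF w) :
    ent w ≤ ent (Finsupp.mapDomain Prod.fst w) + ent (Finsupp.mapDomain Prod.snd w) := by
  classical
  set m1 := Finsupp.mapDomain Prod.fst w with hm1
  set m2 := Finsupp.mapDomain Prod.snd w with hm2
  have hpos : ∀ x ∈ w.support, 0 < w x := fun x hx =>
    lt_of_le_of_ne (hw.1 x) (Ne.symm (Finsupp.mem_support_iff.mp hx))
  have hm1pos : ∀ x ∈ w.support, 0 < m1 x.1 := fun x hx =>
    lt_of_lt_of_le (hpos x hx) (le_mapDomain Prod.fst w hw.1 x)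
  have hm2pos : ∀ x ∈ w.support, 0 < m2 x.2 := fun x hx =>
    lt_of_lt_of_le (hpos x hx) (le_mapDomain Prod.snd w hw.1 x)
  have e0 := ent_eq_neg_sum w
  have e1 := ent_mapDomain_eq Prod.fst w hw.1
  have e2 := ent_mapDomain_eq Prod.snd w hw.1
  rw [← hm1] at e1; rw [← hm2] at e2
  -- main inequality via Gibbs
  have hA : ∀ x ∈ w.support, x.1 ∈ m1.support := fun x hx =>
    Finsupp.mem_support_iff.mpr (ne_of_gt (hm1pos x hx))
  have hB : ∀ x ∈ w.support, x.2 ∈ m2.support := fun x hx =>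
    Finsupp.mem_support_iff.mpr (ne_of_gt (hm2pos x hx))
  set A := w.support.image Prod.fst with hA'
  set B := w.support.image Prod.snd with hB'
  have hsub : w.support ⊆ A ×ˢ B := fun x hx =>
    Finset.mem_product.mpr ⟨Finset.mem_image_of_mem _ hx, Finset.mem_image_of_mem _ hx⟩
  have hqsum : ∑ x ∈ w.support, m1 x.1 * m2 x.2 ≤ ∑ x ∈ w.support, w x := by
    have step1 : ∑ x ∈ w.support, m1 x.1 * m2 x.2 ≤ ∑ x ∈ A ×ˢ B, m1 x.1 * m2 x.2 :=
      Finset.sum_le_sum_of_subset_of_nonneg hsub (fun x _ _ =>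
        mul_nonneg (mapDomain_nonneg _ w hw.1 _) (mapDomain_nonneg _ w hw.1 _))
    have step2 : ∑ x ∈ A ×ˢ B, m1 x.1 * m2 x.2
        = (∑ a ∈ A, m1 a) * (∑ b ∈ B, m2 b) := by
      rw [Finset.sum_product, Finset.sum_mul]
      exact Finset.sum_congr rfl fun a _ => by rw [Finset.mul_sum]
    have hAsub : A ⊆ m1.support := by
      rw [hA']; intro a ha
      obtain ⟨x, hx, rfl⟩ := Finset.mem_image.mp ha
      exact hA x hx
    have hBsub : B ⊆ m2.support := by
      rw [hB']; intro b hb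
      obtain ⟨x, hx, rfl⟩ := Finset.mem_image.mp hb
      exact hB x hx
    have hm1tot : ∑ a ∈ A, m1 a ≤ 1 := by
      rw [← (isPMF_mapDomain hw : IsPMF m1).2]
      exact Finset.sum_le_sum_of_subset_of_nonneg hAsub
        (fun a _ _ => mapDomain_nonneg _ w hw.1 a)
    have hm2tot : ∑ b ∈ B, m2 b ≤ 1 := by
      rw [← (isPMF_mapDomain hw : IsPMF m2).2]
      exact Finset.sum_le_sum_of_subset_of_nonneg hBsub
        (fun b _ _ => mapDomain_nonneg _ w hw.1 b)
    have hAnn : 0 ≤ ∑ a ∈ A, m1 a :=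
      Finset.sum_nonneg fun a _ => mapDomain_nonneg _ w hw.1 a
    have hBnn : 0 ≤ ∑ b ∈ B, m2 b :=
      Finset.sum_nonneg fun b _ => mapDomain_nonneg _ w hw.1 b
    calc ∑ x ∈ w.support, m1 x.1 * m2 x.2 ≤ (∑ a ∈ A, m1 a) * (∑ b ∈ B, m2 b) := by
          rw [← step2]; exact step1
      _ ≤ 1 := by nlinarith
      _ = ∑ x ∈ w.support, w x := hw.2.symm
  have hgibbs := gibbs (p := fun x => w x) (q := fun x => m1 x.1 * m2 x.2)
    hpos (fun x hx => mul_pos (hm1pos x hx) (hm2pos x hx)) hqsum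
  have hlog : ∀ x ∈ w.support, w x * Real.log (m1 x.1 * m2 x.2)
      = w x * Real.log (m1 x.1) + w x * Real.log (m2 x.2) := by
    intro x hx
    rw [Real.log_mul (ne_of_gt (hm1pos x hx)) (ne_of_gt (hm2pos x hx))]
    ring
  rw [Finset.sum_congr rfl hlog, Finset.sum_add_distrib] at hgibbs
  rw [e0, e1, e2]
  linarith

/-- Submodularity of entropy. -/
private lemma ent_submodular (w : (α × β × γ) →₀ ℝ) (hw : IsPMF w) :
    ent w + ent (Finsupp.mapDomain (fun x : α × β × γ => x.2.2) w)
      ≤ ent (Finsupp.mapDomain (fun x : α × β × γ => (x.1, x.2.2)) w)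
        + ent (Finsupp.mapDomain (Prod.snd : α × β × γ → β × γ) w) := by
  classical
  set m3 := Finsupp.mapDomain (fun x : α × β × γ => x.2.2) w with hm3
  set m13 := Finsupp.mapDomain (fun x : α × β × γ => (x.1, x.2.2)) w with hm13
  set m23 := Finsupp.mapDomain (Prod.snd : α × β × γ → β × γ) w with hm23
  have hc13 : m3 = Finsupp.mapDomain Prod.snd m13 := by
    rw [hm3, hm13, ← Finsupp.mapDomain_comp]; rfl
  have hc23 : m3 = Finsupp.mapDomain Prod.snd m23 := by
    rw [hm3, hm23, ← Finsupp.mapDomain_comp]; rfl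
  have hpos : ∀ x ∈ w.support, 0 < w x := fun x hx =>
    lt_of_le_of_ne (hw.1 x) (Ne.symm (Finsupp.mem_support_iff.mp hx))
  have h3pos : ∀ x ∈ w.support, 0 < m3 x.2.2 := fun x hx =>
    lt_of_lt_of_le (hpos x hx) (le_mapDomain _ w hw.1 x)
  have h13pos : ∀ x ∈ w.support, 0 < m13 (x.1, x.2.2) := fun x hx =>
    lt_of_lt_of_le (hpos x hx) (le_mapDomain _ w hw.1 x)
  have h23pos : ∀ x ∈ w.support, 0 < m23 x.2 := fun x hx =>
    lt_of_lt_of_le (hpos x hx) (le_mapDomain _ w hw.1 x)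
  have e0 := ent_eq_neg_sum w
  have e3 := ent_mapDomain_eq (fun x : α × β × γ => x.2.2) w hw.1
  have e13 := ent_mapDomain_eq (fun x : α × β × γ => (x.1, x.2.2)) w hw.1
  have e23 := ent_mapDomain_eq (Prod.snd : α × β × γ → β × γ) w hw.1
  rw [← hm3] at e3; rw [← hm13] at e13; rw [← hm23] at e23
  set A := w.support.image (fun x : α × β × γ => x.1) with hA
  set B := w.support.image (fun x : α × β × γ => x.2.1) with hB
  set C := w.support.image (fun x : α × β × γ => x.2.2) with hC
  have hCpos : ∀ c ∈ C, 0 < m3 c := by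
    intro c hc
    obtain ⟨x, hx, rfl⟩ := Finset.mem_image.mp hc
    exact h3pos x hx
  set Q : α × β × γ → ℝ := fun x => m13 (x.1, x.2.2) * m23 x.2 / m3 x.2.2 with hQ
  have hsub : w.support ⊆ A ×ˢ B ×ˢ C := by
    intro x hx
    refine Finset.mem_product.mpr ⟨Finset.mem_image_of_mem _ hx,
      Finset.mem_product.mpr ⟨Finset.mem_image_of_mem _ hx, Finset.mem_image_of_mem _ hx⟩⟩
  have hQnn : ∀ x ∈ A ×ˢ B ×ˢ C, 0 ≤ Q x := by
    intro x hx
    have hc : x.2.2 ∈ C := (Finset.mem_product.mp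
      (Finset.mem_product.mp hx).2).2
    have := hCpos _ hc
    rw [hQ]
    have h1 := mapDomain_nonneg (fun x : α × β × γ => (x.1, x.2.2)) w hw.1 (x.1, x.2.2)
    have h2 := mapDomain_nonneg (Prod.snd : α × β × γ → β × γ) w hw.1 x.2
    rw [← hm13] at h1; rw [← hm23] at h2
    positivity
  have hQsum : ∑ x ∈ w.support, Q x ≤ ∑ x ∈ w.support, w x := by
    have step1 : ∑ x ∈ w.support, Q x ≤ ∑ x ∈ A ×ˢ B ×ˢ C, Q x :=
      Finset.sum_le_sum_of_subset_of_nonneg hsub (fun x hx _ => hQnn x hx)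
    have step2 : ∑ x ∈ A ×ˢ B ×ˢ C, Q x
        = ∑ c ∈ C, (∑ a ∈ A, m13 (a, c)) * (∑ b ∈ B, m23 (b, c)) / m3 c := by
      rw [Finset.sum_product]
      have h1 : ∀ a : α, ∑ y ∈ B ×ˢ C, Q (a, y) = ∑ c ∈ C, ∑ b ∈ B, Q (a, (b, c)) := by
        intro a; rw [Finset.sum_product]; exact Finset.sum_comm
      rw [Finset.sum_congr rfl (fun a _ => h1 a), Finset.sum_comm]
      refine Finset.sum_congr rfl fun c _ => ?_
      rw [Finset.sum_mul, Finset.sum_div]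
      refine Finset.sum_congr rfl fun a _ => ?_
      rw [Finset.mul_sum, Finset.sum_div]
    have step3 : ∀ c ∈ C, (∑ a ∈ A, m13 (a, c)) * (∑ b ∈ B, m23 (b, c)) / m3 c ≤ m3 c := by
      intro c hc
      have hmc := hCpos c hc
      have hF : ∑ a ∈ A, m13 (a, c) ≤ m3 c := by
        rw [hc13]
        exact sum_fiber_le m13 (fun x => mapDomain_nonneg _ w hw.1 x) A c
      have hG : ∑ b ∈ B, m23 (b, c) ≤ m3 c := by
        rw [hc23]
        exact sum_fiber_le m23 (fun x => mapDomain_nonneg _ w hw.1 x) B c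
      have hFnn : 0 ≤ ∑ a ∈ A, m13 (a, c) :=
        Finset.sum_nonneg fun a _ => mapDomain_nonneg _ w hw.1 (a, c)
      have hGnn : 0 ≤ ∑ b ∈ B, m23 (b, c) :=
        Finset.sum_nonneg fun b _ => mapDomain_nonneg _ w hw.1 (b, c)
      rw [div_le_iff₀ hmc]
      nlinarith
    have step4 : ∑ c ∈ C, m3 c ≤ 1 := by
      have hCsub : C ⊆ m3.support := by
        intro c hc
        exact Finsupp.mem_support_iff.mpr (ne_of_gt (hCpos c hc))
      rw [← (isPMF_mapDomain hw : IsPMF m3).2]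
      exact Finset.sum_le_sum_of_subset_of_nonneg hCsub
        (fun c _ _ => mapDomain_nonneg _ w hw.1 c)
    calc ∑ x ∈ w.support, Q x ≤ ∑ x ∈ A ×ˢ B ×ˢ C, Q x := step1
      _ = ∑ c ∈ C, (∑ a ∈ A, m13 (a, c)) * (∑ b ∈ B, m23 (b, c)) / m3 c := step2
      _ ≤ ∑ c ∈ C, m3 c := Finset.sum_le_sum step3
      _ ≤ 1 := step4
      _ = ∑ x ∈ w.support, w x := hw.2.symm
  have hgibbs := gibbs (p := fun x => w x) (q := Q) hpos
    (fun x hx => by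
      rw [hQ]
      exact div_pos (mul_pos (h13pos x hx) (h23pos x hx)) (h3pos x hx)) hQsum
  have hlog : ∀ x ∈ w.support, w x * Real.log (Q x)
      = w x * Real.log (m13 (x.1, x.2.2)) + w x * Real.log (m23 x.2)
        - w x * Real.log (m3 x.2.2) := by
    intro x hx
    rw [hQ]
    dsimp only
    rw [Real.log_div (ne_of_gt (mul_pos (h13pos x hx) (h23pos x hx))) (ne_of_gt (h3pos x hx)),
      Real.log_mul (ne_of_gt (h13pos x hx)) (ne_of_gt (h23pos x hx))]
    ring
  rw [Finset.sum_congr rfl hlog] at hgibbs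
  rw [Finset.sum_sub_distrib, Finset.sum_add_distrib] at hgibbs
  rw [e0, e3, e13, e23]
  linarith

/-- The key inequality: for any coupling `w` of `p` and `r`, and `q` independent,
`H(X' - Z') + H(Y) ≤ H(X - Y) + H(Y - Z)`. -/
private lemma key_bound {G : Type*} [AddCommGroup G] (w : (G × G) →₀ ℝ) (q : G →₀ ℝ)
    (hw : IsPMF w) (hq : IsPMF q) :
    ent (Finsupp.mapDomain (fun z : G × G => z.1 - z.2) w) + ent q
      ≤ ent (subDist (fstMarg w) q) + ent (subDist q (sndMarg w)) := by
  classical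
  set sb : G × G → G := fun z => z.1 - z.2 with hsb
  set W : ((G × G) × G) →₀ ℝ := prodPMF w q with hWdef
  have hW : IsPMF W := isPMF_prodPMF hw hq
  set φ : (G × G) × G → G × ((G × G) × G) :=
    fun ω => (ω.1.1 - ω.2, (ω.1, ω.1.1 - ω.1.2)) with hφ
  have hφinj : Function.Injective φ := by
    rintro ⟨⟨x, z⟩, y⟩ ⟨⟨x', z'⟩, y'⟩ h
    rw [hφ] at h
    simp only [Prod.mk.injEq] at h
    obtain ⟨h1, ⟨h2a, h2b⟩, _⟩ := h
    subst h2a; subst h2b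
    have : y = y' := by
      have := sub_right_inj.mp h1
      exact this
    subst this; rfl
  set T := Finsupp.mapDomain φ W with hT
  have hTpmf : IsPMF T := isPMF_mapDomain hW
  have hsubmod := ent_submodular T hTpmf
  -- identify ent T
  have eT : ent T = ent w + ent q := by
    rw [hT, ent_mapDomain_of_injective hφinj, hWdef, ent_prodPMF' hw hq]
  -- the third marginal of T is the pushforward of w under subtraction
  have e3 : Finsupp.mapDomain (fun x : G × ((G × G) × G) => x.2.2) T
      = Finsupp.mapDomain sb w := by
    rw [hT, ← Finsupp.mapDomain_comp]
    have hfun : ((fun x : G × ((G × G) × G) => x.2.2) ∘ φ) = sb ∘ Prod.fst := rfl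
    rw [hfun, Finsupp.mapDomain_comp, hWdef, mapDomain_fst_prodPMF w hq]
  -- the (2,3) marginal of T has the entropy of w
  have e23 : ent (Finsupp.mapDomain (Prod.snd : G × ((G × G) × G) → (G × G) × G) T)
      = ent w := by
    rw [hT, ← Finsupp.mapDomain_comp]
    have hfun : ((Prod.snd : G × ((G × G) × G) → (G × G) × G) ∘ φ)
        = (fun s : G × G => (s, s.1 - s.2)) ∘ Prod.fst := rfl
    rw [hfun, Finsupp.mapDomain_comp, hWdef, mapDomain_fst_prodPMF w hq]
    have hg2inj : Function.Injective (fun s : G × G => (s, s.1 - s.2)) := by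
      intro a b h
      exact (Prod.mk.injEq _ _ _ _ ▸ h : _ ∧ _).1
    exact ent_mapDomain_of_injective hg2inj w
  -- the (1,3) marginal of T: entropy equals that of (X - Y, Y - Z)
  set ψ' : (G × G) × G → G × G := fun ω => (ω.1.1 - ω.2, ω.2 - ω.1.2) with hψ'
  set P' := Finsupp.mapDomain ψ' W with hP'
  have e13 : ent (Finsupp.mapDomain (fun x : G × ((G × G) × G) => (x.1, x.2.2)) T)
      = ent P' := by
    rw [hT, ← Finsupp.mapDomain_comp]
    set τ : G × G → G × G := fun s => (s.1, s.2 - s.1) with hτ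
    have hτinj : Function.Injective τ := by
      intro a b h
      rw [hτ] at h
      simp only [Prod.mk.injEq] at h
      obtain ⟨h1, h2⟩ := h
      rw [h1] at h2
      have := sub_left_inj.mp h2
      exact Prod.ext h1 this
    have hcomp : τ ∘ ((fun x : G × ((G × G) × G) => (x.1, x.2.2)) ∘ φ) = ψ' := by
      funext ω
      rw [hτ, hψ', hφ]
      simp only [Function.comp_apply, Prod.mk.injEq]
      refine ⟨trivial, ?_⟩
      abel
    rw [hP', ← hcomp, Finsupp.mapDomain_comp, Finsupp.mapDomain_comp,
      ent_mapDomain_of_injective hτinj, Finsupp.mapDomain_comp]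
  have hP'pmf : IsPMF P' := isPMF_mapDomain hW
  have hsubadd := ent_le_add_marginals P' hP'pmf
  have ef : Finsupp.mapDomain (Prod.fst : G × G → G) P' = subDist (fstMarg w) q := by
    rw [hP', ← Finsupp.mapDomain_comp]
    have hfun : ((Prod.fst : G × G → G) ∘ ψ') = sb ∘ Prod.map Prod.fst id := rfl
    rw [hfun, Finsupp.mapDomain_comp, hWdef, mapDomain_prodMap_left]
    rfl
  have es : Finsupp.mapDomain (Prod.snd : G × G → G) P' = subDist q (sndMarg w) := by
    rw [hP', ← Finsupp.mapDomain_comp]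
    have hfun : ((Prod.snd : G × G → G) ∘ ψ')
        = sb ∘ (Prod.swap ∘ Prod.map Prod.snd id) := rfl
    rw [hfun, Finsupp.mapDomain_comp, Finsupp.mapDomain_comp, hWdef,
      mapDomain_prodMap_left]
    have hsw : Finsupp.mapDomain Prod.swap (prodPMF (Finsupp.mapDomain Prod.snd w) q)
        = prodPMF q (Finsupp.mapDomain Prod.snd w) := mapDomain_swap_prodPMF _ _
    rw [hsw]
    rfl
  rw [eT, e3, e13, e23] at hsubmod
  rw [ef, es] at hsubadd
  linarith

end AuxLemmas

/-- For random variables `X, Y, Z` taking values in finite subsets of an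
abelian group `G`, one has `d*_ent(X, Z) ≤ d_ent(X, Y) + d_ent(Y, Z)`. -/
theorem statement1 {G : Type*} [AddCommGroup G] (p q r : G →₀ ℝ)
    (hp : IsPMF p) (hq : IsPMF q) (hr : IsPMF r) :
    dEntStar p r ≤ dEnt p q + dEnt q r := by
  classical
  have hkey : ∀ w : (G × G) →₀ ℝ, IsPMF w → fstMarg w = p → sndMarg w = r →
      ent (Finsupp.mapDomain (fun z : G × G => z.1 - z.2) w) - ent p / 2 - ent r / 2
        ≤ dEnt p q + dEnt q r := by
    intro w hw h1 h2
    have h := key_bound w q hw hq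
    rw [h1, h2] at h
    unfold dEnt
    linarith
  rw [dEntStar]
  refine csSup_le ?_ ?_
  · refine ⟨ent (Finsupp.mapDomain (fun z : G × G => z.1 - z.2) (prodPMF p r))
      - ent p / 2 - ent r / 2, prodPMF p r, isPMF_prodPMF hp hr, ?_, ?_, rfl⟩
    · exact mapDomain_fst_prodPMF p hr
    · exact mapDomain_snd_prodPMF hp r
  · rintro d ⟨w, hw, h1, h2, rfl⟩
    exact hkey w hw h1 h2

end
end

section
/- Let G be an abelian group and let X, Y be random variables taking values in finite subsets of G. Then d_ent(X, Y) ≤ d*_ent(X, Y) ≤ 3 d_ent(X, Y). -/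
open Finset

noncomputable section

namespace S2

variable {α β γ : Type*}





variable {α β γ : Type*}

/-- fiber formula for mapDomain -/
lemma mapDomain_apply_eq [DecidableEq β] (f : α → β) (w : α →₀ ℝ) (y : β) :
    Finsupp.mapDomain f w y = ∑ x ∈ w.support.filter (fun x => f x = y), w x := by
  classical
  rw [Finsupp.mapDomain, Finsupp.sum_apply, Finsupp.sum, Finset.sum_filter]
  refine Finset.sum_congr rfl fun x _ => ?_
  rw [Finsupp.single_apply]

lemma mapDomain_nonneg (f : α → β) {w : α →₀ ℝ} (hw : ∀ x, 0 ≤ w x) (y : β) :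
    0 ≤ Finsupp.mapDomain f w y := by
  classical
  rw [mapDomain_apply_eq]
  exact Finset.sum_nonneg fun x _ => hw x

lemma le_mapDomain (f : α → β) {w : α →₀ ℝ} (hw : ∀ x, 0 ≤ w x) (x : α) :
    w x ≤ Finsupp.mapDomain f w (f x) := by
  classical
  rw [mapDomain_apply_eq]
  by_cases hx : x ∈ w.support
  · exact Finset.single_le_sum (fun i _ => hw i)
      (Finset.mem_filter.2 ⟨hx, rfl⟩)
  · rw [Finsupp.notMem_support_iff.1 hx]
    exact Finset.sum_nonneg fun i _ => hw i

/-- H1: pushforward sums -/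
lemma sum_mapDomain_mul (f : α → β) (w : α →₀ ℝ) (g : β → ℝ) :
    ∑ y ∈ (Finsupp.mapDomain f w).support, (Finsupp.mapDomain f w) y * g y
      = ∑ x ∈ w.support, w x * g (f x) := by
  classical
  have hsub : (Finsupp.mapDomain f w).support ⊆ w.support.image f :=
    Finsupp.mapDomain_support
  rw [Finset.sum_subset hsub (fun y _ hy => by
    rw [Finsupp.notMem_support_iff.1 hy, zero_mul])]
  rw [← Finset.sum_fiberwise_of_maps_to (fun x hx => Finset.mem_image_of_mem f hx)
    (fun x => w x * g (f x))]
  refine Finset.sum_congr rfl fun y hy => ?_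
  rw [mapDomain_apply_eq, Finset.sum_mul]
  refine Finset.sum_congr rfl fun x hx => ?_
  rw [(Finset.mem_filter.1 hx).2]

lemma mass_mapDomain (f : α → β) (w : α →₀ ℝ) :
    ∑ y ∈ (Finsupp.mapDomain f w).support, (Finsupp.mapDomain f w) y
      = ∑ x ∈ w.support, w x := by
  have := sum_mapDomain_mul f w (fun _ => 1)
  simpa using this

lemma isPMF_mapDomain (f : α → β) {w : α →₀ ℝ} (hw : IsPMF w) :
    IsPMF (Finsupp.mapDomain f w) :=
  ⟨mapDomain_nonneg f hw.1, by rw [mass_mapDomain]; exact hw.2⟩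

/-- entropy over a superset of the support -/
lemma ent_eq_sum {p : α →₀ ℝ} {S : Finset α} (h : p.support ⊆ S) :
    ent p = ∑ x ∈ S, Real.negMulLog (p x) :=
  Finset.sum_subset h (fun x _ hx => by
    rw [Finsupp.notMem_support_iff.1 hx, Real.negMulLog_zero])

lemma ent_mapDomain_of_injective {f : α → β} (hf : Function.Injective f) (w : α →₀ ℝ) :
    ent (Finsupp.mapDomain f w) = ent w := by
  classical
  unfold ent
  rw [Finsupp.mapDomain_support_of_injective hf, Finset.sum_image
    (fun a _ b _ h => hf h)]
  refine Finset.sum_congr rfl fun x _ => ?_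
  rw [Finsupp.mapDomain_apply hf]


/-- Gibbs' inequality: entropy is at most cross-entropy. -/
lemma gibbs {s : Finset α} {p r : α → ℝ} (hp0 : ∀ x ∈ s, 0 ≤ p x)
    (hr0 : ∀ x ∈ s, 0 ≤ r x) (hpr : ∀ x ∈ s, p x ≠ 0 → r x ≠ 0)
    (hr1 : ∑ x ∈ s, r x ≤ 1) (hp1 : ∑ x ∈ s, p x = 1) :
    ∑ x ∈ s, Real.negMulLog (p x) ≤ ∑ x ∈ s, -(p x * Real.log (r x)) := by
  have key : ∀ x ∈ s, p x * Real.log (r x) - p x * Real.log (p x) ≤ r x - p x := by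
    intro x hx
    rcases eq_or_lt_of_le (hp0 x hx) with h0 | h0
    · rw [← h0]; simpa using hr0 x hx
    · have hr : 0 < r x := lt_of_le_of_ne (hr0 x hx) (Ne.symm (hpr x hx (ne_of_gt h0)))
      have hlog : Real.log (r x / p x) ≤ r x / p x - 1 :=
        Real.log_le_sub_one_of_pos (div_pos hr h0)
      rw [Real.log_div (ne_of_gt hr) (ne_of_gt h0)] at hlog
      have := mul_le_mul_of_nonneg_left hlog (le_of_lt h0)
      calc p x * Real.log (r x) - p x * Real.log (p x)
          = p x * (Real.log (r x) - Real.log (p x)) := by ring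
        _ ≤ p x * (r x / p x - 1) := this
        _ = r x - p x := by field_simp
  have hsum : ∑ x ∈ s, (p x * Real.log (r x) - p x * Real.log (p x)) ≤ 0 := by
    calc ∑ x ∈ s, (p x * Real.log (r x) - p x * Real.log (p x))
        ≤ ∑ x ∈ s, (r x - p x) := Finset.sum_le_sum key
      _ = (∑ x ∈ s, r x) - ∑ x ∈ s, p x := Finset.sum_sub_distrib _ _
      _ ≤ 0 := by rw [hp1]; linarith
  have : ∑ x ∈ s, Real.negMulLog (p x) = ∑ x ∈ s, -(p x * Real.log (p x)) := by
    refine Finset.sum_congr rfl fun x _ => ?_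
    rw [Real.negMulLog, neg_mul]
  rw [this]
  rw [Finset.sum_sub_distrib] at hsum
  simp only [Finset.sum_neg_distrib]
  linarith

@[simp] lemma prodPMF_apply (p : α →₀ ℝ) (q : β →₀ ℝ) (z : α × β) :
    prodPMF p q z = p z.1 * q z.2 := rfl

lemma prodPMF_support (p : α →₀ ℝ) (q : β →₀ ℝ) :
    (prodPMF p q).support = p.support ×ˢ q.support := by
  ext z
  simp [Finsupp.mem_support_iff, Finset.mem_product, prodPMF_apply, mul_ne_zero_iff]

lemma isPMF_prodPMF {p : α →₀ ℝ} {q : β →₀ ℝ} (hp : IsPMF p) (hq : IsPMF q) :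
    IsPMF (prodPMF p q) := by
  refine ⟨fun z => mul_nonneg (hp.1 z.1) (hq.1 z.2), ?_⟩
  rw [prodPMF_support, Finset.sum_product]
  simp_rw [prodPMF_apply]
  rw [← Finset.sum_mul_sum, hp.2, hq.2, one_mul]

lemma ent_prodPMF {p : α →₀ ℝ} {q : β →₀ ℝ} (hp : IsPMF p) (hq : IsPMF q) :
    ent (prodPMF p q) = ent p + ent q := by
  unfold ent
  rw [prodPMF_support, Finset.sum_product]
  simp_rw [prodPMF_apply, Real.negMulLog_mul]
  have h1 : ∀ a, ∑ b ∈ q.support, (q b * Real.negMulLog (p a) + p a * Real.negMulLog (q b))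
      = Real.negMulLog (p a) + p a * (∑ b ∈ q.support, Real.negMulLog (q b)) := by
    intro a
    rw [Finset.sum_add_distrib, ← Finset.sum_mul, hq.2, one_mul, ← Finset.mul_sum]
  simp_rw [h1]
  rw [Finset.sum_add_distrib, ← Finset.sum_mul, hp.2, one_mul]

lemma fstMarg_prodPMF (p : α →₀ ℝ) {q : β →₀ ℝ} (hq : IsPMF q) :
    fstMarg (prodPMF p q) = p := by
  classical
  ext a
  rw [fstMarg, mapDomain_apply_eq, prodPMF_support]
  have : ((p.support ×ˢ q.support).filter (fun z => z.1 = a))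
      = (p.support.filter (fun x => x = a)) ×ˢ q.support := by
    rw [← Finset.filter_product_left]
  rw [this, Finset.sum_product]
  simp_rw [prodPMF_apply]
  rw [Finset.sum_filter]
  simp_rw [← Finset.mul_sum, hq.2, mul_one]
  rw [Finset.sum_ite_eq' p.support a (fun x => p x)]
  by_cases ha : a ∈ p.support
  · rw [if_pos ha]
  · rw [if_neg ha]; exact (Finsupp.notMem_support_iff.1 ha).symm

lemma sndMarg_prodPMF {p : α →₀ ℝ} (hp : IsPMF p) (q : β →₀ ℝ) :
    sndMarg (prodPMF p q) = q := by
  classical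
  ext b
  rw [sndMarg, mapDomain_apply_eq, prodPMF_support]
  have : ((p.support ×ˢ q.support).filter (fun z => z.2 = b))
      = p.support ×ˢ (q.support.filter (fun y => y = b)) := by
    rw [← Finset.filter_product_right]
  rw [this, Finset.sum_product]
  simp_rw [prodPMF_apply]
  rw [Finset.sum_comm, Finset.sum_filter]
  simp_rw [← Finset.sum_mul, hp.2, one_mul]
  rw [Finset.sum_ite_eq' q.support b (fun y => q y)]
  by_cases hb : b ∈ q.support
  · rw [if_pos hb]
  · rw [if_neg hb]; exact (Finsupp.notMem_support_iff.1 hb).symm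
variable {δ : Type*}

lemma mapDomain_prodMap (f : α → γ) (g : β → δ) (p : α →₀ ℝ) (q : β →₀ ℝ) :
    Finsupp.mapDomain (Prod.map f g) (prodPMF p q)
      = prodPMF (Finsupp.mapDomain f p) (Finsupp.mapDomain g q) := by
  classical
  ext z
  obtain ⟨a, b⟩ := z
  rw [mapDomain_apply_eq, prodPMF_support, prodPMF_apply, mapDomain_apply_eq,
    mapDomain_apply_eq, Finset.sum_mul_sum]
  have hset : ((p.support ×ˢ q.support).filter (fun z => Prod.map f g z = (a, b)))
      = (p.support.filter (fun x => f x = a)) ×ˢ (q.support.filter (fun y => g y = b)) := by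
    ext z
    simp only [Finset.mem_filter, Finset.mem_product, Prod.map, Prod.ext_iff]
    tauto
  rw [hset, Finset.sum_product]
  rfl

lemma mapDomain_swap (p : α →₀ ℝ) (q : β →₀ ℝ) :
    Finsupp.mapDomain Prod.swap (prodPMF p q) = prodPMF q p := by
  ext z
  have : (Prod.swap : α × β → β × α) = (Equiv.prodComm α β : α × β → β × α) := rfl
  rw [this, Finsupp.mapDomain_equiv_apply]
  simp [mul_comm]

lemma mapDomain_const (w : α →₀ ℝ) (c : β) :
    Finsupp.mapDomain (fun _ => c) w = Finsupp.single c (∑ x ∈ w.support, w x) := by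
  classical
  ext y
  rw [mapDomain_apply_eq, Finsupp.single_apply]
  by_cases h : c = y
  · rw [if_pos h, Finset.filter_true_of_mem fun _ _ => h]
  · rw [if_neg h, Finset.filter_false_of_mem fun _ _ => h, Finset.sum_empty]
lemma ent_eq_neg_sum (p : α →₀ ℝ) :
    ent p = -∑ x ∈ p.support, p x * Real.log (p x) := by
  unfold ent
  rw [← Finset.sum_neg_distrib]
  refine Finset.sum_congr rfl fun x _ => ?_
  rw [Real.negMulLog, neg_mul]

/-- Submodularity-type inequality: if `C`-valued data is determined by each
coordinate separately, then `H(u) + H(t) ≤ H(u₁) + H(u₂)`. -/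
lemma submod {A B C : Type*} {u : (A × B) →₀ ℝ} {t : C →₀ ℝ}
    (hu : IsPMF u) (φ : A → C) (ψ : B → C)
    (hsupp : ∀ z ∈ u.support, φ z.1 = ψ z.2)
    (hφ : Finsupp.mapDomain φ (fstMarg u) = t)
    (hψ : Finsupp.mapDomain ψ (sndMarg u) = t) :
    ent u + ent t ≤ ent (fstMarg u) + ent (sndMarg u) := by
  classical
  set pa := fstMarg u with hpa
  set pb := sndMarg u with hpb
  have hpa0 : ∀ a, 0 ≤ pa a := mapDomain_nonneg _ hu.1
  have hpb0 : ∀ b, 0 ≤ pb b := mapDomain_nonneg _ hu.1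
  have ht0 : ∀ c, 0 ≤ t c := by
    rw [← hφ]; exact mapDomain_nonneg _ hpa0
  have hpa_mass : ∑ a ∈ pa.support, pa a = 1 := (isPMF_mapDomain _ hu).2
  have hpb_mass : ∑ b ∈ pb.support, pb b = 1 := (isPMF_mapDomain _ hu).2
  have ht_mass : ∑ c ∈ t.support, t c = 1 := by
    rw [← hφ]; exact (isPMF_mapDomain _ (isPMF_mapDomain _ hu)).2
  -- positivity on support
  have hule : ∀ z : A × B, u z ≤ pa z.1 := fun z => le_mapDomain Prod.fst hu.1 z
  have hule' : ∀ z : A × B, u z ≤ pb z.2 := fun z => le_mapDomain Prod.snd hu.1 z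
  have hpat : ∀ a, pa a ≤ t (φ a) := fun a => by
    rw [← hφ]; exact le_mapDomain φ hpa0 a
  have hpbt : ∀ b, pb b ≤ t (ψ b) := fun b => by
    rw [← hψ]; exact le_mapDomain ψ hpb0 b
  have hupos : ∀ z ∈ u.support, 0 < u z := fun z hz =>
    lt_of_le_of_ne (hu.1 z) (Ne.symm (Finsupp.mem_support_iff.1 hz))
  set r : A × B → ℝ := fun z => pa z.1 * pb z.2 / t (φ z.1) with hr
  have hr0 : ∀ z, 0 ≤ r z := fun z =>
    div_nonneg (mul_nonneg (hpa0 _) (hpb0 _)) (ht0 _)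
  have hrpos : ∀ z ∈ u.support, 0 < r z := by
    intro z hz
    have h1 : 0 < pa z.1 := lt_of_lt_of_le (hupos z hz) (hule z)
    have h2 : 0 < pb z.2 := lt_of_lt_of_le (hupos z hz) (hule' z)
    have h3 : 0 < t (φ z.1) := lt_of_lt_of_le h1 (hpat z.1)
    exact div_pos (mul_pos h1 h2) h3
  -- the big set T
  set T : Finset (A × B) := (pa.support ×ˢ pb.support).filter (fun z => φ z.1 = ψ z.2)
    with hT
  have hsubT : u.support ⊆ T := by
    intro z hz
    refine Finset.mem_filter.2 ⟨Finset.mem_product.2 ⟨?_, ?_⟩, hsupp z hz⟩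
    · exact Finsupp.mem_support_iff.2 (ne_of_gt (lt_of_lt_of_le (hupos z hz) (hule z)))
    · exact Finsupp.mem_support_iff.2 (ne_of_gt (lt_of_lt_of_le (hupos z hz) (hule' z)))
  have hmaps : ∀ z ∈ T, φ z.1 ∈ t.support := by
    intro z hz
    have h1 : z.1 ∈ pa.support := (Finset.mem_product.1 (Finset.mem_filter.1 hz).1).1
    have : 0 < pa z.1 :=
      lt_of_le_of_ne (hpa0 _) (Ne.symm (Finsupp.mem_support_iff.1 h1))
    exact Finsupp.mem_support_iff.2 (ne_of_gt (lt_of_lt_of_le this (hpat z.1)))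
  -- the r-sum bound
  have hr1 : ∑ z ∈ u.support, r z ≤ 1 := by
    have step1 : ∑ z ∈ u.support, r z ≤ ∑ z ∈ T, r z :=
      Finset.sum_le_sum_of_subset_of_nonneg hsubT (fun z _ _ => hr0 z)
    have step2 : ∑ z ∈ T, r z ≤ ∑ c ∈ t.support, t c := by
      rw [← Finset.sum_fiberwise_of_maps_to hmaps r]
      refine Finset.sum_le_sum fun c hc => ?_
      have htc : 0 < t c :=
        lt_of_le_of_ne (ht0 c) (Ne.symm (Finsupp.mem_support_iff.1 hc))
      have inner_sub : T.filter (fun z => φ z.1 = c)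
          ⊆ (pa.support.filter (fun a => φ a = c)) ×ˢ (pb.support.filter (fun b => ψ b = c)) := by
        intro z hz
        obtain ⟨hzT, hzc⟩ := Finset.mem_filter.1 hz
        obtain ⟨hzprod, hzeq⟩ := Finset.mem_filter.1 hzT
        obtain ⟨h1, h2⟩ := Finset.mem_product.1 hzprod
        exact Finset.mem_product.2 ⟨Finset.mem_filter.2 ⟨h1, hzc⟩,
          Finset.mem_filter.2 ⟨h2, hzeq ▸ hzc⟩⟩
      have hval : ∀ z ∈ T.filter (fun z => φ z.1 = c), r z = pa z.1 * pb z.2 / t c := by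
        intro z hz
        show pa z.1 * pb z.2 / t (φ z.1) = _
        rw [(Finset.mem_filter.1 hz).2]
      calc ∑ z ∈ T.filter (fun z => φ z.1 = c), r z
          = ∑ z ∈ T.filter (fun z => φ z.1 = c), pa z.1 * pb z.2 / t c :=
            Finset.sum_congr rfl hval
        _ ≤ ∑ z ∈ (pa.support.filter (fun a => φ a = c)) ×ˢ
              (pb.support.filter (fun b => ψ b = c)), pa z.1 * pb z.2 / t c :=
            Finset.sum_le_sum_of_subset_of_nonneg inner_sub (fun z _ _ =>
              div_nonneg (mul_nonneg (hpa0 _) (hpb0 _)) (le_of_lt htc))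
        _ = (∑ a ∈ pa.support.filter (fun a => φ a = c), pa a)
            * (∑ b ∈ pb.support.filter (fun b => ψ b = c), pb b) / t c := by
            rw [Finset.sum_product, Finset.sum_mul_sum, Finset.sum_div]
            refine Finset.sum_congr rfl fun x _ => ?_
            rw [Finset.sum_div]
        _ = t c * t c / t c := by
            rw [← mapDomain_apply_eq φ pa c, ← mapDomain_apply_eq ψ pb c, hφ, hψ]
        _ = t c := by field_simp
    rw [ht_mass] at step2
    linarith
  -- apply Gibbs
  have hgibbs := gibbs (s := u.support) (p := fun z => u z) (r := r)
    (fun z _ => hu.1 z) (fun z _ => hr0 z)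
    (fun z hz _ => ne_of_gt (hrpos z hz)) hr1 hu.2
  -- rewrite cross-entropy
  have hcross : ∑ z ∈ u.support, -(u z * Real.log (r z))
      = ent pa + ent pb - ent t := by
    have hlog : ∀ z ∈ u.support, Real.log (r z)
        = Real.log (pa z.1) + Real.log (pb z.2) - Real.log (t (φ z.1)) := by
      intro z hz
      have h1 : 0 < pa z.1 := lt_of_lt_of_le (hupos z hz) (hule z)
      have h2 : 0 < pb z.2 := lt_of_lt_of_le (hupos z hz) (hule' z)
      have h3 : 0 < t (φ z.1) := lt_of_lt_of_le h1 (hpat z.1)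
      rw [hr]
      rw [Real.log_div (ne_of_gt (mul_pos h1 h2)) (ne_of_gt h3),
        Real.log_mul (ne_of_gt h1) (ne_of_gt h2)]
    have expand : ∑ z ∈ u.support, -(u z * Real.log (r z))
        = -(∑ z ∈ u.support, u z * Real.log (pa z.1))
          - (∑ z ∈ u.support, u z * Real.log (pb z.2))
          + (∑ z ∈ u.support, u z * Real.log (t (φ z.1))) := by
      have hterm : ∀ z ∈ u.support, -(u z * Real.log (r z))
          = -(u z * Real.log (pa z.1)) - u z * Real.log (pb z.2)
            + u z * Real.log (t (φ z.1)) := by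
        intro z hz; rw [hlog z hz]; ring
      rw [Finset.sum_congr rfl hterm, Finset.sum_add_distrib, Finset.sum_sub_distrib,
        Finset.sum_neg_distrib]
    rw [expand]
    have e1 : ∑ z ∈ u.support, u z * Real.log (pa z.1)
        = ∑ a ∈ pa.support, pa a * Real.log (pa a) :=
      (sum_mapDomain_mul Prod.fst u (fun a => Real.log (pa a))).symm
    have e2 : ∑ z ∈ u.support, u z * Real.log (pb z.2)
        = ∑ b ∈ pb.support, pb b * Real.log (pb b) :=
      (sum_mapDomain_mul Prod.snd u (fun b => Real.log (pb b))).symm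
    have e3 : ∑ z ∈ u.support, u z * Real.log (t (φ z.1))
        = ∑ c ∈ t.support, t c * Real.log (t c) := by
      have hcomp : Finsupp.mapDomain (fun z : A × B => φ z.1) u = t := by
        rw [show (fun z : A × B => φ z.1) = φ ∘ Prod.fst from rfl,
          Finsupp.mapDomain_comp]
        exact hφ
      have := sum_mapDomain_mul (fun z : A × B => φ z.1) u (fun c => Real.log (t c))
      rw [hcomp] at this
      exact this.symm
    rw [e1, e2, e3, ent_eq_neg_sum pa, ent_eq_neg_sum pb, ent_eq_neg_sum t]
    ring
  rw [hcross] at hgibbs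
  have : ent u ≤ ent pa + ent pb - ent t := hgibbs
  linarith
lemma ent_single_one (c : α) : ent (Finsupp.single c (1 : ℝ)) = 0 := by
  unfold ent
  rw [Finsupp.support_single_ne_zero c one_ne_zero, Finset.sum_singleton,
    Finsupp.single_eq_same, Real.negMulLog_one]

lemma subadd {A B : Type*} {u : (A × B) →₀ ℝ} (hu : IsPMF u) :
    ent u ≤ ent (fstMarg u) + ent (sndMarg u) := by
  have hmass1 : ∑ a ∈ (fstMarg u).support, (fstMarg u) a = 1 := (isPMF_mapDomain _ hu).2
  have hmass2 : ∑ b ∈ (sndMarg u).support, (sndMarg u) b = 1 := (isPMF_mapDomain _ hu).2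
  have h := submod (t := Finsupp.single () (1 : ℝ)) hu (fun _ => ()) (fun _ => ())
    (fun _ _ => rfl)
    (by rw [mapDomain_const, hmass1])
    (by rw [mapDomain_const, hmass2])
  rw [ent_single_one] at h
  linarith

lemma ent_subDist_comm {G : Type*} [AddCommGroup G] (u v : G →₀ ℝ) :
    ent (subDist v u) = ent (subDist u v) := by
  have h1 : subDist v u = Finsupp.mapDomain Neg.neg (subDist u v) := by
    unfold subDist
    rw [← mapDomain_swap u v, ← Finsupp.mapDomain_comp, ← Finsupp.mapDomain_comp]
    congr 1
    funext z
    show z.2 - z.1 = -(z.1 - z.2)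
    abel
  rw [h1, ent_mapDomain_of_injective neg_injective]

lemma key {G : Type*} [AddCommGroup G] {u v s : G →₀ ℝ} {w : (G × G) →₀ ℝ}
    (hs : IsPMF s) (hw : IsPMF w)
    (h1 : fstMarg w = u) (h2 : sndMarg w = v) :
    ent (Finsupp.mapDomain (fun z : G × G => z.1 - z.2) w) + ent s
      ≤ ent (subDist u s) + ent (subDist s v) := by
  classical
  set φ : G × G → G := fun z => z.1 - z.2 with hφd
  set w' : ((G × G) × G) →₀ ℝ := prodPMF w s with hw'd
  have hw'P : IsPMF w' := isPMF_prodPMF hw hs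
  set g : (G × G) × G → G × G := fun ω => (ω.1.1 - ω.2, ω.2 - ω.1.2) with hgd
  set pair : (G × G) × G → (G × G) × (G × G) := fun ω => (ω.1, g ω) with hpaird
  set u' := Finsupp.mapDomain pair w' with hu'd
  have hu'P : IsPMF u' := isPMF_mapDomain _ hw'P
  set t := Finsupp.mapDomain φ w with htd
  -- identify first marginal of u'
  have hfstcomp : Finsupp.mapDomain (Prod.fst : (G×G)×(G×G) → G×G) u'
      = Finsupp.mapDomain Prod.fst w' := by
    rw [hu'd, ← Finsupp.mapDomain_comp]
    rfl
  have hfstw' : Finsupp.mapDomain (Prod.fst : (G×G)×G → G×G) w' = w :=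
    fstMarg_prodPMF w hs
  have hfst : fstMarg u' = w := by
    rw [fstMarg, hfstcomp]; exact hfstw'
  -- second marginal of u'
  have hsnd : sndMarg u' = Finsupp.mapDomain g w' := by
    rw [sndMarg, hu'd, ← Finsupp.mapDomain_comp]
    rfl
  -- submod hypotheses
  have hsupp : ∀ z ∈ u'.support, φ z.1 = (fun z : G × G => z.1 + z.2) z.2 := by
    intro z hz
    have := Finsupp.mapDomain_support hz
    obtain ⟨ω, _, rfl⟩ := Finset.mem_image.1 this
    show ω.1.1 - ω.1.2 = (ω.1.1 - ω.2) + (ω.2 - ω.1.2)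
    abel
  have hφc : Finsupp.mapDomain φ (fstMarg u') = t := by rw [hfst]
  have hψc : Finsupp.mapDomain (fun z : G × G => z.1 + z.2) (sndMarg u') = t := by
    rw [hsnd, ← Finsupp.mapDomain_comp]
    have hcomp : ((fun z : G × G => z.1 + z.2) ∘ g) = (φ ∘ Prod.fst) := by
      funext ω
      show (ω.1.1 - ω.2) + (ω.2 - ω.1.2) = ω.1.1 - ω.1.2
      abel
    rw [hcomp, Finsupp.mapDomain_comp, hfstw', htd]
  have hmain := submod hu'P φ (fun z : G × G => z.1 + z.2) hsupp hφc hψc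
  -- ent u' = ent w + ent s
  have hpair_inj : Function.Injective pair := by
    intro ω₁ ω₂ h
    have hA : ω₁.1 = ω₂.1 := (Prod.ext_iff.mp h).1
    have hB : g ω₁ = g ω₂ := (Prod.ext_iff.mp h).2
    have hc : ω₁.2 = ω₂.2 := by
      have hC : ω₁.1.1 - ω₁.2 = ω₂.1.1 - ω₂.2 := (Prod.ext_iff.mp hB).1
      rw [hA] at hC
      exact sub_right_injective hC
    exact Prod.ext hA hc
  have hentu' : ent u' = ent w + ent s := by
    rw [hu'd, ent_mapDomain_of_injective hpair_inj, hw'd, ent_prodPMF hw hs]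
  -- bound ent (mapDomain g w')
  set u'' := Finsupp.mapDomain g w' with hu''d
  have hu''P : IsPMF u'' := isPMF_mapDomain _ hw'P
  have hfstu'' : fstMarg u'' = subDist u s := by
    rw [fstMarg, hu''d, ← Finsupp.mapDomain_comp]
    have : ((Prod.fst : G×G → G) ∘ g) = (φ ∘ (Prod.map Prod.fst id : (G×G)×G → G×G)) := by
      funext ω; rfl
    rw [this, Finsupp.mapDomain_comp, hw'd, mapDomain_prodMap, Finsupp.mapDomain_id]
    rw [show Finsupp.mapDomain Prod.fst w = u from h1]
    rfl
  have hsndu'' : sndMarg u'' = subDist s v := by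
    rw [sndMarg, hu''d, ← Finsupp.mapDomain_comp]
    have : ((Prod.snd : G×G → G) ∘ g)
        = (φ ∘ ((Prod.map id Prod.snd : G×(G×G) → G×G) ∘ (Prod.swap : (G×G)×G → G×(G×G)))) := by
      funext ω; rfl
    rw [this, Finsupp.mapDomain_comp, Finsupp.mapDomain_comp, hw'd, mapDomain_swap,
      mapDomain_prodMap, Finsupp.mapDomain_id]
    rw [show Finsupp.mapDomain Prod.snd w = v from h2]
    rfl
  have hsub := subadd hu''P
  rw [hfstu'', hsndu''] at hsub
  rw [hentu', hfst, hsnd] at hmain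
  -- t is mapDomain φ w
  have : ent t = ent (Finsupp.mapDomain (fun z : G × G => z.1 - z.2) w) := by rw [htd]
  linarith [hmain, hsub, this]
lemma coupling_bound {G : Type*} [AddCommGroup G] {p q : G →₀ ℝ}
    (hp : IsPMF p) (hq : IsPMF q) {w : (G × G) →₀ ℝ} (hw : IsPMF w)
    (h1 : fstMarg w = p) (h2 : sndMarg w = q) :
    ent (Finsupp.mapDomain (fun z : G × G => z.1 - z.2) w) - ent p / 2 - ent q / 2
      ≤ 3 * dEnt p q := by
  have k1 := key hq hw h1 h2
  have k2' := key hp (isPMF_prodPMF hq hq) (fstMarg_prodPMF q hq) (sndMarg_prodPMF hq q)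
  have k2 : ent (subDist q q) + ent p ≤ ent (subDist q p) + ent (subDist p q) := k2'
  have e : ent (subDist q p) = ent (subDist p q) := ent_subDist_comm p q
  unfold dEnt
  linarith
theorem statement2' {G : Type*} [AddCommGroup G] (p q : G →₀ ℝ)
    (hp : IsPMF p) (hq : IsPMF q) :
    dEnt p q ≤ dEntStar p q ∧ dEntStar p q ≤ 3 * dEnt p q := by
  have hmem : dEnt p q ∈ { d : ℝ | ∃ w : (G × G) →₀ ℝ, IsPMF w ∧ fstMarg w = p ∧
      sndMarg w = q ∧
      d = ent (Finsupp.mapDomain (fun z : G × G => z.1 - z.2) w) - ent p / 2 - ent q / 2 } :=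
    ⟨prodPMF p q, isPMF_prodPMF hp hq, fstMarg_prodPMF p hq, sndMarg_prodPMF hp q, rfl⟩
  have hub : ∀ d ∈ { d : ℝ | ∃ w : (G × G) →₀ ℝ, IsPMF w ∧ fstMarg w = p ∧
      sndMarg w = q ∧
      d = ent (Finsupp.mapDomain (fun z : G × G => z.1 - z.2) w) - ent p / 2 - ent q / 2 },
      d ≤ 3 * dEnt p q := by
    rintro d ⟨w, hw, h1, h2, rfl⟩
    exact coupling_bound hp hq hw h1 h2
  have hbdd : BddAbove { d : ℝ | ∃ w : (G × G) →₀ ℝ, IsPMF w ∧ fstMarg w = p ∧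
      sndMarg w = q ∧
      d = ent (Finsupp.mapDomain (fun z : G × G => z.1 - z.2) w) - ent p / 2 - ent q / 2 } :=
    ⟨3 * dEnt p q, hub⟩
  exact ⟨le_csSup hbdd hmem, csSup_le ⟨_, hmem⟩ hub⟩

end S2

/-- For random variables `X, Y` taking values in finite subsets of an
abelian group `G`, one has `d_ent(X, Y) ≤ d*_ent(X, Y) ≤ 3 d_ent(X, Y)`. -/
theorem statement2 {G : Type*} [AddCommGroup G] (p q : G →₀ ℝ)
    (hp : IsPMF p) (hq : IsPMF q) :
    dEnt p q ≤ dEntStar p q ∧ dEntStar p q ≤ 3 * dEnt p q :=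
  S2.statement2' p q hp hq

end
end

section
/- Let G be an abelian group, let H be a finite subgroup of G, and suppose that X is an H-valued random variable with H(X) ≥ log |H| − 1/8. Then log |H| − H(X) ≤ 2 d_ent(X, X). -/
open Finset

noncomputable section

namespace S14
open Real Set MeasureTheory Finset



/-- φ(t) = t log t - t + 1 -/
def phi (t : ℝ) : ℝ := t * Real.log t - t + 1

lemma phi_nonneg {t : ℝ} (ht : 0 ≤ t) : 0 ≤ phi t := by
  rcases eq_or_lt_of_le ht with h | h
  · simp [phi, ← h]
  · have h1 : Real.log t⁻¹ ≤ t⁻¹ - 1 := Real.log_le_sub_one_of_pos (by positivity)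
    rw [Real.log_inv] at h1
    have h2 := mul_le_mul_of_nonneg_left (neg_le_neg h1) h.le
    have h3 : t * t⁻¹ = 1 := mul_inv_cancel₀ h.ne'
    unfold phi; nlinarith [h2, h3]

lemma phi_tangent {τ c : ℝ} (hτ : 0 ≤ τ) (hc : 0 < c) :
    phi c + Real.log c * (τ - c) ≤ phi τ := by
  rcases eq_or_lt_of_le hτ with h | h
  · subst h; unfold phi; simp; nlinarith [Real.log_le_sub_one_of_pos hc]
  · have h1 : Real.log (c / τ) ≤ c / τ - 1 := Real.log_le_sub_one_of_pos (by positivity)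
    rw [Real.log_div hc.ne' h.ne'] at h1
    have h2 := mul_le_mul_of_nonneg_left h1 h.le
    have h3 : τ * (c / τ - 1) = c - τ := by field_simp
    unfold phi; nlinarith [h2, h3]


private lemma hasDeriv_logit {s : ℝ} (hs0 : 0 < s) (hs1 : s < 1) :
    HasDerivAt (fun s : ℝ => Real.log s - Real.log (1 - s) - 4 * s)
      (s⁻¹ - (1 - s)⁻¹ * (-1) - 4) s := by
  apply HasDerivAt.sub ?_ (by simpa using (hasDerivAt_id s).const_mul 4)
  apply HasDerivAt.sub (Real.hasDerivAt_log hs0.ne')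
  exact (Real.hasDerivAt_log (by linarith)).comp s (by simpa using (hasDerivAt_id s).const_sub 1)

/-- logit minus 4x is monotone on (0,1) -/
lemma logit_bound {x y : ℝ} (hx : 0 < x) (hxy : x ≤ y) (hy : y < 1) :
    Real.log x - Real.log (1 - x) - 4 * x ≤ Real.log y - Real.log (1 - y) - 4 * y := by
  set F : ℝ → ℝ := fun s => Real.log s - Real.log (1 - s) - 4 * s with hF
  have key : MonotoneOn F (Icc x y) := by
    apply monotoneOn_of_deriv_nonneg (convex_Icc x y)
    · apply ContinuousOn.sub (ContinuousOn.sub ?_ ?_) (by fun_prop)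
      · apply Real.continuousOn_log.comp (by fun_prop)
        intro s hs; simp at hs ⊢; linarith [hs.1]
      · apply Real.continuousOn_log.comp (by fun_prop)
        intro s hs; simp at hs ⊢; intro h; linarith [hs.2, h]
    · intro s hs
      rw [interior_Icc] at hs
      exact (hasDeriv_logit (lt_trans hx hs.1) (lt_of_lt_of_le hs.2 hy.le)).differentiableAt.differentiableWithinAt
    · intro s hs
      rw [interior_Icc] at hs
      have hs0 : 0 < s := lt_trans hx hs.1
      have hs1 : s < 1 := lt_of_lt_of_le hs.2 hy.le
      rw [(hasDeriv_logit hs0 hs1).deriv]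
      have hss : (0:ℝ) < s * (1 - s) := by nlinarith
      have h1s : (1:ℝ) - s ≠ 0 := by linarith
      have h5 : s⁻¹ - (1 - s)⁻¹ * (-1) - 4 = (1 - 2*s)^2 / (s * (1-s)) := by
        rw [eq_div_iff hss.ne']; field_simp; ring
      rw [h5]; positivity
  have := key (left_mem_Icc.2 hxy) (right_mem_Icc.2 hxy) hxy
  simpa [hF] using this

private lemma hasDeriv_GG {b s : ℝ} (hs0 : 0 < s) (hs1 : s < 1) :
    HasDerivAt (fun s : ℝ => s * (Real.log s - Real.log b)
      + (1 - s) * (Real.log (1 - s) - Real.log (1 - b)) - 2 * (s - b)^2)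
      ((Real.log s - Real.log b) + s * s⁻¹
        + ((-1) * (Real.log (1 - s) - Real.log (1 - b)) + (1 - s) * ((1 - s)⁻¹ * (-1)))
        - 2 * (2 * (s - b))) s := by
  have h1s : (1:ℝ) - s ≠ 0 := by intro h; linarith [h]
  apply HasDerivAt.sub
  · apply HasDerivAt.add
    · simpa using (hasDerivAt_id s).fun_mul ((Real.hasDerivAt_log hs0.ne').sub_const (Real.log b))
    · have hf : HasDerivAt (fun s : ℝ => 1 - s) (-1) s := by
        simpa using (hasDerivAt_id s).const_sub 1
      have hg : HasDerivAt (fun s : ℝ => Real.log (1 - s) - Real.log (1 - b))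
          ((1 - s)⁻¹ * (-1)) s :=
        ((Real.hasDerivAt_log h1s).comp s hf).sub_const _
      exact hf.mul hg
  · have : HasDerivAt (fun s : ℝ => (s - b)^2) (2 * (s - b)) s := by
      simpa using ((hasDerivAt_id s).sub_const b).fun_pow 2
    simpa [mul_comm] using this.const_mul 2

/-- two-point Pinsker, interior case -/
lemma pinsker_two_point_lt {a b : ℝ} (hb : 0 < b) (hba : b ≤ a) (ha : a < 1) :
    2 * (a - b)^2 ≤ a * (Real.log a - Real.log b)
      + (1 - a) * (Real.log (1 - a) - Real.log (1 - b)) := by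
  have hb1 : b < 1 := lt_of_le_of_lt hba ha
  set GG : ℝ → ℝ := fun s => s * (Real.log s - Real.log b)
      + (1 - s) * (Real.log (1 - s) - Real.log (1 - b)) - 2 * (s - b)^2 with hGG
  have key : MonotoneOn GG (Icc b a) := by
    apply monotoneOn_of_deriv_nonneg (convex_Icc b a)
    · apply ContinuousOn.sub ?_ (by fun_prop)
      apply ContinuousOn.add
      · apply ContinuousOn.mul (by fun_prop)
        apply ContinuousOn.sub ?_ (by fun_prop)
        apply Real.continuousOn_log.comp (by fun_prop)
        intro s hs; simp at hs ⊢; linarith [hs.1]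
      · apply ContinuousOn.mul (by fun_prop)
        apply ContinuousOn.sub ?_ (by fun_prop)
        apply Real.continuousOn_log.comp (by fun_prop)
        intro s hs; simp at hs ⊢; intro h; linarith [hs.2, h]
    · intro s hs
      rw [interior_Icc] at hs
      exact (hasDeriv_GG (lt_trans hb hs.1) (lt_trans hs.2 ha)).differentiableAt.differentiableWithinAt
    · intro s hs
      rw [interior_Icc] at hs
      have hs0 : 0 < s := lt_trans hb hs.1
      have hs1 : s < 1 := lt_trans hs.2 ha
      rw [(hasDeriv_GG hs0 hs1).deriv]
      have h1 : s * s⁻¹ = 1 := mul_inv_cancel₀ hs0.ne'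
      have h2 : (1 - s) * ((1 - s)⁻¹ * (-1)) = -1 := by
        rw [← mul_assoc, mul_inv_cancel₀ (by linarith : (1:ℝ) - s ≠ 0)]; ring
      rw [h1, h2]
      have := logit_bound hb hs.1.le hs1
      linarith
  have hfin := key (left_mem_Icc.2 hba) (right_mem_Icc.2 hba) hba
  have hGb : GG b = 0 := by simp [hGG]
  rw [hGb] at hfin
  simpa [hGG] using hfin

/-- boundary case: -log b ≥ 2(1-b)^2 -/
lemma pinsker_two_point_one {b : ℝ} (hb : 0 < b) (hb1 : b ≤ 1) :
    2 * (1 - b)^2 ≤ -Real.log b := by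
  set F : ℝ → ℝ := fun s => -Real.log s - 2 * (1 - s)^2 with hF
  have key : AntitoneOn F (Icc b 1) := by
    apply antitoneOn_of_deriv_nonpos (convex_Icc b 1)
    · apply ContinuousOn.sub ?_ (by fun_prop)
      apply ContinuousOn.neg
      apply Real.continuousOn_log.comp (by fun_prop)
      intro s hs; simp at hs ⊢; linarith [hs.1]
    · intro s hs
      rw [interior_Icc] at hs
      have hs0 : 0 < s := lt_trans hb hs.1
      apply DifferentiableAt.differentiableWithinAt
      exact ((Real.differentiableAt_log hs0.ne').neg).sub (by fun_prop)
    · intro s hs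
      rw [interior_Icc] at hs
      have hs0 : 0 < s := lt_trans hb hs.1
      have hd : HasDerivAt F (-s⁻¹ - 2 * (2 * (1 - s) * (-1))) s := by
        apply HasDerivAt.sub (Real.hasDerivAt_log hs0.ne').neg
        have hf : HasDerivAt (fun s : ℝ => 1 - s) (-1) s := by
          simpa using (hasDerivAt_id s).const_sub 1
        simpa [mul_comm, mul_assoc] using ((hf.pow 2).const_mul 2)
      rw [hd.deriv]
      have h5 : -s⁻¹ - 2 * (2 * (1 - s) * (-1)) = -((1 - 2*s)^2 / s) := by
        field_simp [hs0.ne']; ring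
      rw [h5]
      simp only [neg_nonpos]
      positivity
  have hfin := key (left_mem_Icc.2 hb1) (right_mem_Icc.2 hb1) hb1
  have hF1 : F 1 = 0 := by simp [hF]
  rw [hF1] at hfin
  have : 0 ≤ F b := hfin
  simp only [hF] at this
  linarith



/-- hockey-stick kernel -/
def kfun (t γ : ℝ) : ℝ := if γ ≤ 1 then max (γ - t) 0 / γ else max (t - γ) 0 / γ

lemma kfun_nonneg (t : ℝ) {γ : ℝ} (hγ : 0 < γ) : 0 ≤ kfun t γ := by
  unfold kfun; split <;> positivity

lemma piece1 {t : ℝ} (ht : 0 ≤ t) :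
    IntegrableOn (kfun t) (Ioc 0 1) volume ∧
      ∫ γ in Ioc (0:ℝ) 1, kfun t γ = (if t ≤ 1 then phi t else 0) := by
  rcases le_or_gt 1 t with h1t | h1t
  · -- integrand vanishes on Ioc 0 1
    have hzero : EqOn (kfun t) 0 (Ioc (0:ℝ) 1) := by
      intro γ hγ
      simp only [kfun, if_pos hγ.2, Pi.zero_apply]
      rw [max_eq_right (by linarith [hγ.2] : γ - t ≤ 0), zero_div]
    constructor
    · exact (integrableOn_zero).congr_fun hzero.symm measurableSet_Ioc
    · rw [setIntegral_congr_fun measurableSet_Ioc hzero]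
      rcases eq_or_lt_of_le h1t with h | h
      · simp [← h, phi]
      · simp [not_le.2 h]
  · rcases eq_or_lt_of_le ht with h0t | h0t
    · -- t = 0 : integrand is 1
      have hone : EqOn (kfun t) (fun _ => 1) (Ioc (0:ℝ) 1) := by
        intro γ hγ
        simp only [kfun, if_pos hγ.2, ← h0t]
        rw [sub_zero, max_eq_left hγ.1.le, div_self hγ.1.ne']
      constructor
      · exact (integrableOn_const (by simp)).congr_fun hone.symm measurableSet_Ioc
      · rw [setIntegral_congr_fun measurableSet_Ioc hone]
        simp [← h0t, phi, h1t.le]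
    · -- 0 < t < 1
      have hsplit : Ioc (0:ℝ) 1 = Ioc 0 t ∪ Ioc t 1 := (Set.Ioc_union_Ioc_eq_Ioc ht h1t.le).symm
      have hzero : EqOn (kfun t) 0 (Ioc (0:ℝ) t) := by
        intro γ hγ
        simp only [kfun, if_pos (le_trans hγ.2 h1t.le), Pi.zero_apply]
        rw [max_eq_right (by linarith [hγ.2] : γ - t ≤ 0), zero_div]
      have hcong : EqOn (kfun t) (fun γ => 1 - t * γ⁻¹) (Ioc t 1) := by
        intro γ hγ
        have hγ0 : 0 < γ := lt_trans h0t hγ.1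
        simp only [kfun, if_pos hγ.2]
        rw [max_eq_left (by linarith [hγ.1] : 0 ≤ γ - t)]
        field_simp
      have hcont : ContinuousOn (fun γ : ℝ => 1 - t * γ⁻¹) (Icc t 1) := by
        apply ContinuousOn.sub continuousOn_const
        apply ContinuousOn.mul continuousOn_const
        apply ContinuousOn.inv₀ continuousOn_id
        intro γ hγ; exact (lt_of_lt_of_le h0t hγ.1).ne'
      have hint2 : IntegrableOn (kfun t) (Ioc t 1) volume := by
        apply IntegrableOn.congr_fun _ hcong.symm measurableSet_Ioc
        exact (hcont.integrableOn_Icc).mono_set Ioc_subset_Icc_self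
      have hint1 : IntegrableOn (kfun t) (Ioc 0 t) volume :=
        (integrableOn_zero).congr_fun hzero.symm measurableSet_Ioc
      have hval : ∫ γ in Ioc t 1, kfun t γ = 1 - t + t * Real.log t := by
        rw [setIntegral_congr_fun measurableSet_Ioc hcong,
          ← intervalIntegral.integral_of_le h1t.le]
        have : ∫ γ in t..1, (1 - t * γ⁻¹) =
            (fun γ => γ - t * Real.log γ) 1 - (fun γ => γ - t * Real.log γ) t := by
          apply intervalIntegral.integral_eq_sub_of_hasDerivAt
            (f := fun γ => γ - t * Real.log γ) (f' := fun γ => 1 - t * γ⁻¹)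
          · intro γ hγ
            rw [uIcc_of_le h1t.le] at hγ
            have hγ0 : 0 < γ := lt_of_lt_of_le h0t hγ.1
            exact (hasDerivAt_id γ).sub ((Real.hasDerivAt_log hγ0.ne').const_mul t)
          · apply ContinuousOn.intervalIntegrable
            rw [uIcc_of_le h1t.le]; exact hcont
        rw [this]; simp only []; rw [Real.log_one]; ring
      constructor
      · rw [hsplit]; exact hint1.union hint2
      · rw [hsplit, setIntegral_union (Set.Ioc_disjoint_Ioc_of_le le_rfl) measurableSet_Ioc hint1 hint2,
          setIntegral_congr_fun measurableSet_Ioc hzero, hval]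
        simp only [if_pos h1t.le, phi]
        simp; ring

lemma piece2 {t : ℝ} (ht : 0 ≤ t) :
    IntegrableOn (kfun t) (Ioi 1) volume ∧
      ∫ γ in Ioi (1:ℝ), kfun t γ = (if t ≤ 1 then 0 else phi t) := by
  rcases le_or_gt t 1 with h1t | h1t
  · have hzero : EqOn (kfun t) 0 (Ioi (1:ℝ)) := by
      intro γ hγ
      simp only [Set.mem_Ioi] at hγ
      simp only [kfun, if_neg (not_le.2 hγ), Pi.zero_apply]
      rw [max_eq_right (by linarith : t - γ ≤ 0), zero_div]
    constructor
    · exact (integrableOn_zero).congr_fun hzero.symm measurableSet_Ioi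
    · rw [setIntegral_congr_fun measurableSet_Ioi hzero]; simp [h1t]
  · have hsplit : Ioi (1:ℝ) = Ioc 1 t ∪ Ioi t := (Set.Ioc_union_Ioi_eq_Ioi h1t.le).symm
    have hzero : EqOn (kfun t) 0 (Ioi t) := by
      intro γ hγ
      simp only [Set.mem_Ioi] at hγ
      simp only [kfun, if_neg (not_le.2 (lt_trans h1t hγ)), Pi.zero_apply]
      rw [max_eq_right (by linarith : t - γ ≤ 0), zero_div]
    have hcong : EqOn (kfun t) (fun γ => t * γ⁻¹ - 1) (Ioc 1 t) := by
      intro γ hγ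
      have hγ0 : (0:ℝ) < γ := lt_trans one_pos hγ.1
      simp only [kfun, if_neg (not_le.2 hγ.1)]
      rw [max_eq_left (by linarith [hγ.2] : 0 ≤ t - γ)]
      field_simp
    have hcont : ContinuousOn (fun γ : ℝ => t * γ⁻¹ - 1) (Icc 1 t) := by
      apply ContinuousOn.sub _ continuousOn_const
      apply ContinuousOn.mul continuousOn_const
      apply ContinuousOn.inv₀ continuousOn_id
      intro γ hγ; exact (lt_of_lt_of_le one_pos hγ.1).ne'
    have hint2 : IntegrableOn (kfun t) (Ioc 1 t) volume := by
      apply IntegrableOn.congr_fun _ hcong.symm measurableSet_Ioc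
      exact (hcont.integrableOn_Icc).mono_set Ioc_subset_Icc_self
    have hint1 : IntegrableOn (kfun t) (Ioi t) volume :=
      (integrableOn_zero).congr_fun hzero.symm measurableSet_Ioi
    have hval : ∫ γ in Ioc 1 t, kfun t γ = t * Real.log t - t + 1 := by
      rw [setIntegral_congr_fun measurableSet_Ioc hcong,
        ← intervalIntegral.integral_of_le h1t.le]
      have : ∫ γ in (1:ℝ)..t, (t * γ⁻¹ - 1) =
          (fun γ => t * Real.log γ - γ) t - (fun γ => t * Real.log γ - γ) 1 := by
        apply intervalIntegral.integral_eq_sub_of_hasDerivAt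
          (f := fun γ => t * Real.log γ - γ) (f' := fun γ => t * γ⁻¹ - 1)
        · intro γ hγ
          rw [uIcc_of_le h1t.le] at hγ
          have hγ0 : 0 < γ := lt_of_lt_of_le one_pos hγ.1
          exact ((Real.hasDerivAt_log hγ0.ne').const_mul t).sub (hasDerivAt_id γ)
        · apply ContinuousOn.intervalIntegrable
          rw [uIcc_of_le h1t.le]; exact hcont
      rw [this]; simp only []; rw [Real.log_one]; ring
    constructor
    · rw [hsplit]; exact hint2.union hint1
    · rw [hsplit, setIntegral_union (Set.Ioc_disjoint_Ioi le_rfl) measurableSet_Ioi hint2 hint1,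
        setIntegral_congr_fun measurableSet_Ioi hzero, hval]
      simp only [if_neg (not_le.2 h1t), phi]
      simp

lemma kfun_integrableOn {t : ℝ} (ht : 0 ≤ t) :
    IntegrableOn (kfun t) (Ioi 0) volume := by
  rw [← Set.Ioc_union_Ioi_eq_Ioi (le_of_lt one_pos)]
  exact (piece1 ht).1.union (piece2 ht).1

lemma kfun_integral {t : ℝ} (ht : 0 ≤ t) :
    ∫ γ in Ioi (0:ℝ), kfun t γ = phi t := by
  rw [← Set.Ioc_union_Ioi_eq_Ioi (le_of_lt one_pos),
    setIntegral_union (Set.Ioc_disjoint_Ioi le_rfl) measurableSet_Ioi (piece1 ht).1 (piece2 ht).1,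
    (piece1 ht).2, (piece2 ht).2]
  rcases le_or_gt t 1 with h | h
  · simp [h]
  · simp [not_le.2 h]


variable {G : Type*} [AddCommGroup G] [DecidableEq G] {S : Finset G}

section closure
variable (hsub : ∀ x ∈ S, ∀ y ∈ S, x - y ∈ S) (hne : S.Nonempty)
include hsub hne

lemma mem_zero : (0:G) ∈ S := by
  obtain ⟨a, ha⟩ := hne
  simpa using hsub a ha a ha

lemma mem_neg {x : G} (hx : x ∈ S) : -x ∈ S := by
  simpa using hsub 0 (mem_zero hsub hne) x hx

lemma mem_add {x y : G} (hx : x ∈ S) (hy : y ∈ S) : x + y ∈ S := by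
  simpa [sub_neg_eq_add] using hsub x hx (-y) (mem_neg hsub hne hy)

lemma sum_translate {c : G} (hc : c ∈ S) (f : G → ℝ) :
    ∑ x ∈ S, f (x + c) = ∑ x ∈ S, f x := by
  apply Finset.sum_nbij' (fun x => x + c) (fun x => x - c)
  · intro a ha; exact mem_add hsub hne ha hc
  · intro a ha; exact hsub a ha c hc
  · intro a ha; simp
  · intro a ha; simp
  · intro a ha; rfl

lemma sum_translate_sub {c : G} (hc : c ∈ S) (f : G → ℝ) :
    ∑ x ∈ S, f (x - c) = ∑ x ∈ S, f x := by
  have := sum_translate hsub hne (mem_neg hsub hne hc) f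
  simpa [sub_eq_add_neg] using this

lemma sum_reflect {c : G} (hc : c ∈ S) (f : G → ℝ) :
    ∑ x ∈ S, f (c - x) = ∑ x ∈ S, f x := by
  apply Finset.sum_nbij' (fun x => c - x) (fun x => c - x)
  · intro a ha; exact hsub c hc a ha
  · intro a ha; exact hsub c hc a ha
  · intro a ha; simp
  · intro a ha; simp
  · intro a ha; rfl

end closure

lemma pos_sub_pos (r : ℝ) : max r 0 - max (-r) 0 = r := by
  rcases le_total 0 r with h | h
  · rw [max_eq_left h, max_eq_right (neg_nonpos.2 h)]; ring
  · rw [max_eq_right h, max_eq_left (neg_nonneg.2 h)]; ring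

lemma abs_eq_pos_add (r : ℝ) : |r| = max r 0 + max (-r) 0 := by
  rcases le_total 0 r with h | h
  · rw [abs_of_nonneg h, max_eq_left h, max_eq_right (neg_nonpos.2 h)]; ring
  · rw [abs_of_nonpos h, max_eq_right h, max_eq_left (neg_nonneg.2 h)]; ring

section core
variable {G : Type*} [AddCommGroup G] [DecidableEq G] {S : Finset G}
variable {P : G → ℝ}

/-- each of the two halves of the L¹ distance to uniform equals η/2 -/
lemma eta_halves (hne : S.Nonempty) (hP0 : ∀ x ∈ S, 0 ≤ P x) (hP1 : ∑ x ∈ S, P x = 1) :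
    ∑ x ∈ S, max (P x - ((S.card : ℝ))⁻¹) 0
        = (∑ x ∈ S, |P x - ((S.card : ℝ))⁻¹|) / 2 ∧
      ∑ x ∈ S, max (((S.card : ℝ))⁻¹ - P x) 0
        = (∑ x ∈ S, |P x - ((S.card : ℝ))⁻¹|) / 2 := by
  have hcard : (0:ℝ) < (S.card : ℝ) := by
    have := Finset.card_pos.2 hne; exact_mod_cast this
  have hzero : ∑ x ∈ S, (P x - ((S.card : ℝ))⁻¹) = 0 := by
    rw [Finset.sum_sub_distrib, hP1, Finset.sum_const, nsmul_eq_mul,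
      mul_inv_cancel₀ hcard.ne']
    ring
  have e1 : ∀ x ∈ S, max (P x - ((S.card : ℝ))⁻¹) 0 - max (((S.card : ℝ))⁻¹ - P x) 0
      = P x - ((S.card : ℝ))⁻¹ := by
    intro x hx
    have := pos_sub_pos (P x - ((S.card : ℝ))⁻¹)
    rwa [neg_sub] at this
  have e2 : ∀ x ∈ S, max (P x - ((S.card : ℝ))⁻¹) 0 + max (((S.card : ℝ))⁻¹ - P x) 0
      = |P x - ((S.card : ℝ))⁻¹| := by
    intro x hx
    have := abs_eq_pos_add (P x - ((S.card : ℝ))⁻¹)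
    rw [neg_sub] at this
    linarith [this]
  have h1 : ∑ x ∈ S, max (P x - ((S.card : ℝ))⁻¹) 0
      - ∑ x ∈ S, max (((S.card : ℝ))⁻¹ - P x) 0 = 0 := by
    rw [← Finset.sum_sub_distrib, Finset.sum_congr rfl e1]
    exact hzero
  have h2 : ∑ x ∈ S, max (P x - ((S.card : ℝ))⁻¹) 0
      + ∑ x ∈ S, max (((S.card : ℝ))⁻¹ - P x) 0
      = ∑ x ∈ S, |P x - ((S.card : ℝ))⁻¹| := by
    rw [← Finset.sum_add_distrib]
    exact Finset.sum_congr rfl e2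
  constructor <;> linarith [h1, h2]

/-- overlap of P with a translate of P is at least 1 - η -/
lemma overlap (hsub : ∀ x ∈ S, ∀ y ∈ S, x - y ∈ S) (hne : S.Nonempty)
    (hP0 : ∀ x ∈ S, 0 ≤ P x) (hP1 : ∑ x ∈ S, P x = 1)
    {c : G} (hc : c ∈ S) :
    1 - (∑ x ∈ S, |P x - ((S.card : ℝ))⁻¹|) ≤ ∑ t ∈ S, min (P t) (P (t - c)) := by
  set u : ℝ := ((S.card : ℝ))⁻¹ with hu
  have key : ∀ t ∈ S, P t - max (P t - u) 0 - max (u - P (t - c)) 0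
      ≤ min (P t) (P (t - c)) := by
    intro t ht
    have h1 : P t - u ≤ max (P t - u) 0 := le_max_left _ _
    have h2 : u - P (t - c) ≤ max (u - P (t - c)) 0 := le_max_left _ _
    have h3 : (0:ℝ) ≤ max (P t - u) 0 := le_max_right _ _
    have h4 : (0:ℝ) ≤ max (u - P (t - c)) 0 := le_max_right _ _
    apply le_min <;> linarith
  have hsum := Finset.sum_le_sum key
  have e1 : ∑ t ∈ S, (P t - max (P t - u) 0 - max (u - P (t - c)) 0)
      = 1 - (∑ t ∈ S, max (P t - u) 0) - ∑ t ∈ S, max (u - P (t - c)) 0 := by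
    rw [Finset.sum_sub_distrib, Finset.sum_sub_distrib, hP1]
  have e2 : ∑ t ∈ S, max (u - P (t - c)) 0 = ∑ t ∈ S, max (u - P t) 0 :=
    sum_translate_sub hsub hne hc (fun t => max (u - P t) 0)
  obtain ⟨ha, hb⟩ := eta_halves hne hP0 hP1
  rw [e1, e2, ha, hb] at hsum
  linarith [hsum]

/-- Master per-level contraction inequality -/
lemma master (hsub : ∀ x ∈ S, ∀ y ∈ S, x - y ∈ S) (hne : S.Nonempty)
    (hP0 : ∀ x ∈ S, 0 ≤ P x) (hP1 : ∑ x ∈ S, P x = 1)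
    {Q : G → ℝ} (hQ : ∀ s ∈ S, Q s = ∑ x ∈ S, P x * P (x - s)) (cc : ℝ) :
    ∑ s ∈ S, max (Q s - cc) 0
      ≤ (∑ x ∈ S, max (P x - cc) 0)
        - (1 - ∑ x ∈ S, |P x - ((S.card : ℝ))⁻¹|)
          * min (∑ x ∈ S, max (P x - cc) 0) (∑ x ∈ S, max (cc - P x) 0) := by
  classical
  set η : ℝ := ∑ x ∈ S, |P x - ((S.card : ℝ))⁻¹| with hη
  set a : ℝ := ∑ x ∈ S, max (P x - cc) 0 with hadef
  set b : ℝ := ∑ x ∈ S, max (cc - P x) 0 with hbdef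
  set A : G → ℝ := fun s => ∑ x ∈ S, max (P x - cc) 0 * P (x - s) with hA
  set B : G → ℝ := fun s => ∑ x ∈ S, max (cc - P x) 0 * P (x - s) with hB
  have hPs0 : ∀ x ∈ S, ∀ s ∈ S, 0 ≤ P (x - s) := fun x hx s hs => hP0 _ (hsub x hx s hs)
  have ha0 : 0 ≤ a := Finset.sum_nonneg fun x _ => le_max_right _ _
  have hb0 : 0 ≤ b := Finset.sum_nonneg fun x _ => le_max_right _ _
  have hA0 : ∀ s ∈ S, 0 ≤ A s := fun s hs =>
    Finset.sum_nonneg fun x hx => mul_nonneg (le_max_right _ _) (hPs0 x hx s hs)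
  have hB0 : ∀ s ∈ S, 0 ≤ B s := fun s hs =>
    Finset.sum_nonneg fun x hx => mul_nonneg (le_max_right _ _) (hPs0 x hx s hs)
  have hsum1 : ∀ s ∈ S, ∑ x ∈ S, P (x - s) = 1 := by
    intro s hs; rw [sum_translate_sub hsub hne hs P]; exact hP1
  have stepQ : ∀ s ∈ S, Q s - cc = A s - B s := by
    intro s hs
    have e1 : A s - B s = ∑ x ∈ S, (P x - cc) * P (x - s) := by
      rw [hA, hB]; simp only []
      rw [← Finset.sum_sub_distrib]
      apply Finset.sum_congr rfl
      intro x hx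
      rw [← sub_mul]
      congr 1
      have := pos_sub_pos (P x - cc); rwa [neg_sub] at this
    rw [e1, hQ s hs]
    have e2 : ∑ x ∈ S, (P x - cc) * P (x - s)
        = ∑ x ∈ S, P x * P (x - s) - cc * ∑ x ∈ S, P (x - s) := by
      rw [Finset.mul_sum, ← Finset.sum_sub_distrib]
      apply Finset.sum_congr rfl
      intro x hx; ring
    rw [e2, hsum1 s hs, mul_one]
  have stepPt : ∀ s ∈ S, max (Q s - cc) 0 = A s - min (A s) (B s) := by
    intro s hs
    rw [stepQ s hs]
    rcases le_total (B s) (A s) with h | h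
    · rw [max_eq_left (by linarith), min_eq_right h]
    · rw [max_eq_right (by linarith), min_eq_left h]; ring
  have stepA : ∑ s ∈ S, A s = a := by
    rw [hA, hadef]; simp only []
    rw [Finset.sum_comm]
    apply Finset.sum_congr rfl
    intro x hx
    rw [← Finset.mul_sum, sum_reflect hsub hne hx P, hP1, mul_one]
  have minbound : (1 - η) * min a b ≤ ∑ s ∈ S, min (A s) (B s) := by
    have hminnn : 0 ≤ ∑ s ∈ S, min (A s) (B s) :=
      Finset.sum_nonneg fun s hs => le_min (hA0 s hs) (hB0 s hs)
    rcases eq_or_lt_of_le ha0 with h | hapos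
    · have hab : a ≤ b := by rw [← h]; exact hb0
      rw [min_eq_left hab, ← h, mul_zero]; exact hminnn
    rcases eq_or_lt_of_le hb0 with h | hbpos
    · have hba : b ≤ a := by rw [← h]; exact ha0
      rw [min_eq_right hba, ← h, mul_zero]; exact hminnn
    set mx : ℝ := max a b with hmx
    have hmx0 : 0 < mx := lt_of_lt_of_le hapos (le_max_left _ _)
    set W : G → ℝ := fun s => ∑ x ∈ S, ∑ z ∈ S,
        (max (P x - cc) 0 * max (cc - P z) 0) * min (P (x - s)) (P (z - s)) with hW
    have key : ∀ s ∈ S, mx⁻¹ * W s ≤ min (A s) (B s) := by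
      intro s hs
      have hWA : W s ≤ b * A s := by
        rw [hW, hA]; simp only []
        rw [Finset.mul_sum]
        apply Finset.sum_le_sum
        intro x hx
        have hstep : ∀ z ∈ S, (max (P x - cc) 0 * max (cc - P z) 0) * min (P (x - s)) (P (z - s))
            ≤ max (cc - P z) 0 * (max (P x - cc) 0 * P (x - s)) := by
          intro z hz
          have h5 : min (P (x - s)) (P (z - s)) ≤ P (x - s) := min_le_left _ _
          have h6 : (0:ℝ) ≤ max (P x - cc) 0 := le_max_right _ _
          have h7 : (0:ℝ) ≤ max (cc - P z) 0 := le_max_right _ _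
          calc (max (P x - cc) 0 * max (cc - P z) 0) * min (P (x - s)) (P (z - s))
              ≤ (max (P x - cc) 0 * max (cc - P z) 0) * P (x - s) :=
                mul_le_mul_of_nonneg_left h5 (mul_nonneg h6 h7)
            _ = max (cc - P z) 0 * (max (P x - cc) 0 * P (x - s)) := by ring
        calc ∑ z ∈ S, (max (P x - cc) 0 * max (cc - P z) 0) * min (P (x - s)) (P (z - s))
            ≤ ∑ z ∈ S, max (cc - P z) 0 * (max (P x - cc) 0 * P (x - s)) :=
              Finset.sum_le_sum hstep
          _ = b * (max (P x - cc) 0 * P (x - s)) := by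
              rw [← Finset.sum_mul, ← hbdef]
      have hWB : W s ≤ a * B s := by
        rw [hW, hB]; simp only []
        rw [Finset.mul_sum]
        rw [Finset.sum_comm]
        apply Finset.sum_le_sum
        intro z hz
        have hstep : ∀ x ∈ S, (max (P x - cc) 0 * max (cc - P z) 0) * min (P (x - s)) (P (z - s))
            ≤ max (P x - cc) 0 * (max (cc - P z) 0 * P (z - s)) := by
          intro x hx
          have h5 : min (P (x - s)) (P (z - s)) ≤ P (z - s) := min_le_right _ _
          have h6 : (0:ℝ) ≤ max (P x - cc) 0 := le_max_right _ _
          have h7 : (0:ℝ) ≤ max (cc - P z) 0 := le_max_right _ _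
          calc (max (P x - cc) 0 * max (cc - P z) 0) * min (P (x - s)) (P (z - s))
              ≤ (max (P x - cc) 0 * max (cc - P z) 0) * P (z - s) :=
                mul_le_mul_of_nonneg_left h5 (mul_nonneg h6 h7)
            _ = max (P x - cc) 0 * (max (cc - P z) 0 * P (z - s)) := by ring
        calc ∑ x ∈ S, (max (P x - cc) 0 * max (cc - P z) 0) * min (P (x - s)) (P (z - s))
            ≤ ∑ x ∈ S, max (P x - cc) 0 * (max (cc - P z) 0 * P (z - s)) :=
              Finset.sum_le_sum hstep
          _ = a * (max (cc - P z) 0 * P (z - s)) := by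
              rw [← Finset.sum_mul, ← hadef]
      apply le_min
      · calc mx⁻¹ * W s ≤ mx⁻¹ * (b * A s) :=
              mul_le_mul_of_nonneg_left hWA (inv_nonneg.2 hmx0.le)
          _ ≤ mx⁻¹ * (mx * A s) := by
              apply mul_le_mul_of_nonneg_left _ (inv_nonneg.2 hmx0.le)
              exact mul_le_mul_of_nonneg_right (le_max_right a b) (hA0 s hs)
          _ = A s := by field_simp
      · calc mx⁻¹ * W s ≤ mx⁻¹ * (a * B s) :=
              mul_le_mul_of_nonneg_left hWB (inv_nonneg.2 hmx0.le)
          _ ≤ mx⁻¹ * (mx * B s) := by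
              apply mul_le_mul_of_nonneg_left _ (inv_nonneg.2 hmx0.le)
              exact mul_le_mul_of_nonneg_right (le_max_left a b) (hB0 s hs)
          _ = B s := by field_simp
    have hWsum : (1 - η) * (a * b) ≤ ∑ s ∈ S, W s := by
      have e : ∑ s ∈ S, W s = ∑ x ∈ S, ∑ z ∈ S,
          (max (P x - cc) 0 * max (cc - P z) 0) * ∑ s ∈ S, min (P (x - s)) (P (z - s)) := by
        rw [hW]; simp only []
        rw [Finset.sum_comm]
        apply Finset.sum_congr rfl; intro x hx
        rw [Finset.sum_comm]
        apply Finset.sum_congr rfl; intro z hz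
        rw [← Finset.mul_sum]
      have hove : ∀ x ∈ S, ∀ z ∈ S,
          (1 - η) ≤ ∑ s ∈ S, min (P (x - s)) (P (z - s)) := by
        intro x hx z hz
        have hxz : x - z ∈ S := hsub x hx z hz
        have hre : ∑ s ∈ S, min (P (x - s)) (P ((x - s) - (x - z)))
            = ∑ t ∈ S, min (P t) (P (t - (x - z))) :=
          sum_reflect hsub hne hx (fun t => min (P t) (P (t - (x - z))))
        simp only [show ∀ s : G, (x - s) - (x - z) = z - s from fun s => by abel] at hre
        have hov := overlap hsub hne hP0 hP1 hxz
        rw [← hre] at hov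
        exact hov
      have step : ∑ x ∈ S, ∑ z ∈ S, (max (P x - cc) 0 * max (cc - P z) 0) * (1 - η)
          ≤ ∑ x ∈ S, ∑ z ∈ S,
            (max (P x - cc) 0 * max (cc - P z) 0) * ∑ s ∈ S, min (P (x - s)) (P (z - s)) := by
        apply Finset.sum_le_sum; intro x hx
        apply Finset.sum_le_sum; intro z hz
        apply mul_le_mul_of_nonneg_left (hove x hx z hz)
        exact mul_nonneg (le_max_right _ _) (le_max_right _ _)
      have e3 : ∑ x ∈ S, ∑ z ∈ S, (max (P x - cc) 0 * max (cc - P z) 0) * (1 - η)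
          = (1 - η) * (a * b) := by
        calc ∑ x ∈ S, ∑ z ∈ S, (max (P x - cc) 0 * max (cc - P z) 0) * (1 - η)
            = (∑ x ∈ S, ∑ z ∈ S, max (P x - cc) 0 * max (cc - P z) 0) * (1 - η) := by
              rw [Finset.sum_mul]
              apply Finset.sum_congr rfl; intro x hx
              rw [Finset.sum_mul]
          _ = (a * b) * (1 - η) := by rw [← Finset.sum_mul_sum, ← hadef, ← hbdef]
          _ = (1 - η) * (a * b) := by ring
      rw [e]
      rw [e3] at step
      exact step
    have hmmx : min a b * mx = a * b := min_mul_max a b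
    have e4 : (1 - η) * min a b = mx⁻¹ * ((1 - η) * (a * b)) := by
      rw [← hmmx]; field_simp
    calc (1 - η) * min a b = mx⁻¹ * ((1 - η) * (a * b)) := e4
      _ ≤ mx⁻¹ * ∑ s ∈ S, W s :=
          mul_le_mul_of_nonneg_left hWsum (inv_nonneg.2 hmx0.le)
      _ = ∑ s ∈ S, mx⁻¹ * W s := Finset.mul_sum _ _ _
      _ ≤ ∑ s ∈ S, min (A s) (B s) := Finset.sum_le_sum key
  calc ∑ s ∈ S, max (Q s - cc) 0 = ∑ s ∈ S, (A s - min (A s) (B s)) :=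
        Finset.sum_congr rfl stepPt
    _ = a - ∑ s ∈ S, min (A s) (B s) := by rw [Finset.sum_sub_distrib, stepA]
    _ ≤ a - (1 - η) * min a b := by linarith [minbound]

lemma inv_mul_max (c r : ℝ) (hc : 0 ≤ c) : c * max r 0 = max (c * r) 0 := by
  rcases le_total r 0 with h | h
  · rw [max_eq_right h, max_eq_right (mul_nonpos_of_nonneg_of_nonpos hc h), mul_zero]
  · rw [max_eq_left h, max_eq_left (mul_nonneg hc h)]

/-- sum of the positive parts minus the negative parts at level γ/N -/
lemma level_diff (hne : S.Nonempty) {R : G → ℝ} (hR1 : ∑ x ∈ S, R x = 1) (γ : ℝ) :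
    ∑ x ∈ S, max (R x - γ * ((S.card : ℝ))⁻¹) 0
      - ∑ x ∈ S, max (γ * ((S.card : ℝ))⁻¹ - R x) 0 = 1 - γ := by
  have hcard : (0:ℝ) < (S.card : ℝ) := by
    have := Finset.card_pos.2 hne; exact_mod_cast this
  have e1 : ∀ x ∈ S, max (R x - γ * ((S.card : ℝ))⁻¹) 0 - max (γ * ((S.card : ℝ))⁻¹ - R x) 0
      = R x - γ * ((S.card : ℝ))⁻¹ := by
    intro x hx
    have := pos_sub_pos (R x - γ * ((S.card : ℝ))⁻¹)
    rwa [neg_sub] at this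
  rw [← Finset.sum_sub_distrib, Finset.sum_congr rfl e1, Finset.sum_sub_distrib, hR1,
    Finset.sum_const, nsmul_eq_mul]
  rw [mul_comm (γ:ℝ)]
  rw [← mul_assoc, mul_inv_cancel₀ hcard.ne', one_mul]

lemma Q_nonneg (hsub : ∀ x ∈ S, ∀ y ∈ S, x - y ∈ S)
    (hP0 : ∀ x ∈ S, 0 ≤ P x)
    {Q : G → ℝ} (hQ : ∀ s ∈ S, Q s = ∑ x ∈ S, P x * P (x - s)) :
    ∀ s ∈ S, 0 ≤ Q s := by
  intro s hs
  rw [hQ s hs]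
  exact Finset.sum_nonneg fun x hx => mul_nonneg (hP0 x hx) (hP0 _ (hsub x hx s hs))

lemma Q_sum (hsub : ∀ x ∈ S, ∀ y ∈ S, x - y ∈ S) (hne : S.Nonempty)
    (hP1 : ∑ x ∈ S, P x = 1)
    {Q : G → ℝ} (hQ : ∀ s ∈ S, Q s = ∑ x ∈ S, P x * P (x - s)) :
    ∑ s ∈ S, Q s = 1 := by
  rw [Finset.sum_congr rfl hQ, Finset.sum_comm]
  have e : ∀ x ∈ S, ∑ s ∈ S, P x * P (x - s) = P x := by
    intro x hx
    rw [← Finset.mul_sum, sum_reflect hsub hne hx P, hP1, mul_one]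
  rw [Finset.sum_congr rfl e, hP1]

/-- pointwise contraction of the hockey-stick integrands -/
lemma contraction_pointwise (hsub : ∀ x ∈ S, ∀ y ∈ S, x - y ∈ S) (hne : S.Nonempty)
    (hP0 : ∀ x ∈ S, 0 ≤ P x) (hP1 : ∑ x ∈ S, P x = 1)
    {Q : G → ℝ} (hQ : ∀ s ∈ S, Q s = ∑ x ∈ S, P x * P (x - s))
    {γ : ℝ} (hγ : 0 < γ) :
    ∑ s ∈ S, ((S.card : ℝ))⁻¹ * kfun ((S.card : ℝ) * Q s) γ
      ≤ (∑ x ∈ S, |P x - ((S.card : ℝ))⁻¹|)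
        * ∑ x ∈ S, ((S.card : ℝ))⁻¹ * kfun ((S.card : ℝ) * P x) γ := by
  have hcard : (0:ℝ) < (S.card : ℝ) := by
    have := Finset.card_pos.2 hne; exact_mod_cast this
  set N : ℝ := (S.card : ℝ) with hN
  set η : ℝ := ∑ x ∈ S, |P x - N⁻¹| with hη
  set cc : ℝ := γ * N⁻¹ with hcc
  have hη0 : 0 ≤ η := Finset.sum_nonneg fun x _ => abs_nonneg _
  have kein : ∀ R : G → ℝ, ∀ x, N⁻¹ * kfun (N * R x) γ =
      (if γ ≤ 1 then max (cc - R x) 0 / γ else max (R x - cc) 0 / γ) := by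
    intro R x
    unfold kfun
    split
    · have e : N⁻¹ * (γ - N * R x) = cc - R x := by
        rw [hcc]; field_simp; try ring
      calc N⁻¹ * (max (γ - N * R x) 0 / γ) = (N⁻¹ * max (γ - N * R x) 0) / γ := by ring
        _ = max (N⁻¹ * (γ - N * R x)) 0 / γ := by
            rw [inv_mul_max _ _ (inv_nonneg.2 hcard.le)]
        _ = max (cc - R x) 0 / γ := by rw [e]
    · have e : N⁻¹ * (N * R x - γ) = R x - cc := by
        rw [hcc]; field_simp; try ring
      calc N⁻¹ * (max (N * R x - γ) 0 / γ) = (N⁻¹ * max (N * R x - γ) 0) / γ := by ring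
        _ = max (N⁻¹ * (N * R x - γ)) 0 / γ := by
            rw [inv_mul_max _ _ (inv_nonneg.2 hcard.le)]
        _ = max (R x - cc) 0 / γ := by rw [e]
  have hQsum := Q_sum hsub hne hP1 hQ
  have hmaster := master hsub hne hP0 hP1 hQ cc
  have hdiffP := level_diff hne hP1 γ
  have hdiffQ := level_diff hne hQsum γ
  rw [← hN, ← hcc] at hdiffP hdiffQ
  rw [← hN, ← hη] at hmaster
  set a : ℝ := ∑ x ∈ S, max (P x - cc) 0 with hadef
  set b : ℝ := ∑ x ∈ S, max (cc - P x) 0 with hbdef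
  set aQ : ℝ := ∑ s ∈ S, max (Q s - cc) 0 with haQdef
  set bQ : ℝ := ∑ s ∈ S, max (cc - Q s) 0 with hbQdef
  have ha0 : 0 ≤ a := Finset.sum_nonneg fun x _ => le_max_right _ _
  have hb0 : 0 ≤ b := Finset.sum_nonneg fun x _ => le_max_right _ _
  rcases le_or_gt γ 1 with h1 | h1
  · -- γ ≤ 1 : compare the negative parts
    have hmin : min a b = b := min_eq_right (by linarith)
    rw [hmin] at hmaster
    have hkey : bQ ≤ η * b := by linarith
    calc ∑ s ∈ S, N⁻¹ * kfun (N * Q s) γ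
        = ∑ s ∈ S, max (cc - Q s) 0 / γ := by
          apply Finset.sum_congr rfl; intro s hs; rw [kein Q s, if_pos h1]
      _ = bQ / γ := by rw [← Finset.sum_div, ← hbQdef]
      _ ≤ (η * b) / γ := by gcongr
      _ = η * (b / γ) := by ring
      _ = η * ∑ x ∈ S, N⁻¹ * kfun (N * P x) γ := by
          congr 1
          rw [hbdef, Finset.sum_div]
          apply Finset.sum_congr rfl; intro x hx
          rw [kein P x, if_pos h1]
  · have hmin : min a b = a := min_eq_left (by linarith)
    rw [hmin] at hmaster
    have hkey : aQ ≤ η * a := by linarith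
    calc ∑ s ∈ S, N⁻¹ * kfun (N * Q s) γ
        = ∑ s ∈ S, max (Q s - cc) 0 / γ := by
          apply Finset.sum_congr rfl; intro s hs; rw [kein Q s, if_neg (not_le.2 h1)]
      _ = aQ / γ := by rw [← Finset.sum_div, ← haQdef]
      _ ≤ (η * a) / γ := by gcongr
      _ = η * (a / γ) := by ring
      _ = η * ∑ x ∈ S, N⁻¹ * kfun (N * P x) γ := by
          congr 1
          rw [hadef, Finset.sum_div]
          apply Finset.sum_congr rfl; intro x hx
          rw [kein P x, if_neg (not_le.2 h1)]

/-- integral representation of the KL-type sum -/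
lemma rep_integrable {R : G → ℝ} (hR0 : ∀ x ∈ S, 0 ≤ R x) (hcard : (0:ℝ) < (S.card : ℝ)) :
    MeasureTheory.IntegrableOn
      (fun γ => ∑ x ∈ S, ((S.card : ℝ))⁻¹ * kfun ((S.card : ℝ) * R x) γ)
      (Set.Ioi 0) MeasureTheory.volume := by
  apply MeasureTheory.integrable_finset_sum
  intro x hx
  exact (kfun_integrableOn (mul_nonneg hcard.le (hR0 x hx))).const_mul _

lemma rep_integral {R : G → ℝ} (hR0 : ∀ x ∈ S, 0 ≤ R x) (hcard : (0:ℝ) < (S.card : ℝ)) :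
    ∫ γ in Set.Ioi (0:ℝ), ∑ x ∈ S, ((S.card : ℝ))⁻¹ * kfun ((S.card : ℝ) * R x) γ
      = ∑ x ∈ S, ((S.card : ℝ))⁻¹ * phi ((S.card : ℝ) * R x) := by
  rw [MeasureTheory.integral_finset_sum]
  · apply Finset.sum_congr rfl
    intro x hx
    rw [MeasureTheory.integral_const_mul, kfun_integral (mul_nonneg hcard.le (hR0 x hx))]
  · intro x hx
    exact (kfun_integrableOn (mul_nonneg hcard.le (hR0 x hx))).const_mul _

/-- the KL contraction inequality -/
lemma KL_contract (hsub : ∀ x ∈ S, ∀ y ∈ S, x - y ∈ S) (hne : S.Nonempty)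
    (hP0 : ∀ x ∈ S, 0 ≤ P x) (hP1 : ∑ x ∈ S, P x = 1)
    {Q : G → ℝ} (hQ : ∀ s ∈ S, Q s = ∑ x ∈ S, P x * P (x - s)) :
    ∑ s ∈ S, ((S.card : ℝ))⁻¹ * phi ((S.card : ℝ) * Q s)
      ≤ (∑ x ∈ S, |P x - ((S.card : ℝ))⁻¹|)
        * ∑ x ∈ S, ((S.card : ℝ))⁻¹ * phi ((S.card : ℝ) * P x) := by
  have hcard : (0:ℝ) < (S.card : ℝ) := by
    have := Finset.card_pos.2 hne; exact_mod_cast this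
  have hQ0 := Q_nonneg hsub hP0 hQ
  rw [← rep_integral hP0 hcard, ← rep_integral hQ0 hcard,
    ← MeasureTheory.integral_const_mul]
  apply MeasureTheory.setIntegral_mono_on (rep_integrable hQ0 hcard)
    ((rep_integrable hP0 hcard).const_mul _) measurableSet_Ioi
  intro γ hγ
  exact contraction_pointwise hsub hne hP0 hP1 hQ hγ

/-- tangent lower bound for a partial KL sum -/
lemma tangent_sum {T : Finset G} (hTS : T ⊆ S) (hP0 : ∀ x ∈ S, 0 ≤ P x)
    {c : ℝ} (hc : 0 < c) (hcard : (0:ℝ) < (S.card : ℝ)) :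
    (T.card : ℝ) * ((S.card : ℝ))⁻¹ * phi c
      + Real.log c * ((∑ x ∈ T, P x) - c * ((T.card : ℝ) * ((S.card : ℝ))⁻¹))
      ≤ ∑ x ∈ T, ((S.card : ℝ))⁻¹ * phi ((S.card : ℝ) * P x) := by
  set N : ℝ := (S.card : ℝ) with hN
  set u : ℝ := N⁻¹ with hu
  have huN : u * N = 1 := inv_mul_cancel₀ hcard.ne'
  have hu0 : 0 < u := inv_pos.2 hcard
  have point : ∀ x ∈ T, u * (phi c + Real.log c * (N * P x - c)) ≤ u * phi (N * P x) := by
    intro x hx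
    apply mul_le_mul_of_nonneg_left _ hu0.le
    exact phi_tangent (mul_nonneg hcard.le (hP0 x (hTS hx))) hc
  have hsum := Finset.sum_le_sum point
  have e : ∑ x ∈ T, u * (phi c + Real.log c * (N * P x - c))
      = (T.card : ℝ) * u * phi c
        + Real.log c * ((∑ x ∈ T, P x) - c * ((T.card : ℝ) * u)) := by
    have e1 : ∀ x ∈ T, u * (phi c + Real.log c * (N * P x - c))
        = u * phi c + Real.log c * P x - Real.log c * c * u := by
      intro x hx
      have : u * (phi c + Real.log c * (N * P x - c))
          = u * phi c + Real.log c * ((u * N) * P x) - Real.log c * c * u := by ring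
      rw [this, huN, one_mul]
    rw [Finset.sum_congr rfl e1]
    rw [Finset.sum_sub_distrib, Finset.sum_add_distrib, Finset.sum_const,
      Finset.sum_const, nsmul_eq_mul, nsmul_eq_mul, ← Finset.mul_sum]
    ring
  rw [e] at hsum
  exact hsum

/-- Pinsker's inequality for the distance to uniform -/
lemma pinsker (hne : S.Nonempty)
    (hP0 : ∀ x ∈ S, 0 ≤ P x) (hP1 : ∑ x ∈ S, P x = 1) :
    (∑ x ∈ S, |P x - ((S.card : ℝ))⁻¹|)^2
      ≤ 2 * ∑ x ∈ S, ((S.card : ℝ))⁻¹ * phi ((S.card : ℝ) * P x) := by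
  classical
  have hcard : (0:ℝ) < (S.card : ℝ) := by
    have := Finset.card_pos.2 hne; exact_mod_cast this
  set N : ℝ := (S.card : ℝ) with hN
  set u : ℝ := N⁻¹ with hu
  have hu0 : 0 < u := inv_pos.2 hcard
  have hNu : N * u = 1 := mul_inv_cancel₀ hcard.ne'
  set A : Finset G := S.filter (fun x => u < P x) with hA
  set A' : Finset G := S.filter (fun x => ¬ u < P x) with hA'
  set a : ℝ := ∑ x ∈ A, P x with ha
  set b : ℝ := (A.card : ℝ) * u with hb
  have hAS : A ⊆ S := Finset.filter_subset _ _
  have hAS' : A' ⊆ S := Finset.filter_subset _ _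
  have hDP0 : 0 ≤ ∑ x ∈ S, u * phi (N * P x) :=
    Finset.sum_nonneg fun x hx =>
      mul_nonneg hu0.le (phi_nonneg (mul_nonneg hcard.le (hP0 x hx)))
  have hsplitP : a + ∑ x ∈ A', P x = 1 := by
    rw [ha, hA, hA', Finset.sum_filter_add_sum_filter_not]; exact hP1
  have hsplitC : (A.card : ℝ) + (A'.card : ℝ) = N := by
    rw [hA, hA', ← Nat.cast_add, Finset.card_filter_add_card_filter_not, hN]
  have hc' : (A'.card : ℝ) * u = 1 - b := by
    have := congrArg (fun r : ℝ => r * u) hsplitC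
    simp only [add_mul] at this
    rw [hb]; linarith [hNu, this]
  have hsplitD : ∑ x ∈ S, u * phi (N * P x)
      = (∑ x ∈ A, u * phi (N * P x)) + ∑ x ∈ A', u * phi (N * P x) := by
    rw [hA, hA', Finset.sum_filter_add_sum_filter_not]
  have heta : ∑ x ∈ S, |P x - u| = 2 * (a - b) := by
    have e1 : ∑ x ∈ A, |P x - u| = a - b := by
      have : ∀ x ∈ A, |P x - u| = P x - u := by
        intro x hx
        rw [hA, Finset.mem_filter] at hx
        exact abs_of_pos (by linarith [hx.2])
      rw [Finset.sum_congr rfl this, Finset.sum_sub_distrib, Finset.sum_const,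
        nsmul_eq_mul, ← ha, ← hb]
    have e2 : ∑ x ∈ A', |P x - u| = (1 - b) - (1 - a) := by
      have : ∀ x ∈ A', |P x - u| = u - P x := by
        intro x hx
        rw [hA', Finset.mem_filter] at hx
        rw [abs_of_nonpos (by push_neg at hx; linarith [hx.2])]; ring
      rw [Finset.sum_congr rfl this, Finset.sum_sub_distrib, Finset.sum_const,
        nsmul_eq_mul, hc']
      have : ∑ x ∈ A', P x = 1 - a := by linarith [hsplitP]
      rw [this]
    rw [show (∑ x ∈ S, |P x - u|) = (∑ x ∈ A, |P x - u|) + ∑ x ∈ A', |P x - u| by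
      rw [hA, hA', Finset.sum_filter_add_sum_filter_not], e1, e2]
    ring
  rcases Finset.eq_empty_or_nonempty A with hAe | hAne
  · -- A empty : η = 0
    have : a - b = 0 := by rw [ha, hb, hAe]; simp
    rw [heta, this]
    simpa using (by linarith [hDP0] : (0:ℝ) ≤ 2 * ∑ x ∈ S, u * phi (N * P x))
  · -- A nonempty
    have hbpos : 0 < b := by
      rw [hb]
      apply mul_pos _ hu0
      exact_mod_cast Finset.card_pos.2 hAne
    have hba : b < a := by
      have : ∀ x ∈ A, u < P x := by
        intro x hx; rw [hA, Finset.mem_filter] at hx; exact hx.2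
      have := Finset.sum_lt_sum_of_nonempty hAne this
      rw [Finset.sum_const, nsmul_eq_mul] at this
      rw [ha, hb]; linarith [this]
    have ha1 : a ≤ 1 := by
      have : 0 ≤ ∑ x ∈ A', P x := Finset.sum_nonneg fun x hx => hP0 x (hAS' hx)
      linarith [hsplitP]
    have hapos : 0 < a := lt_trans hbpos hba
    -- bound on A
    have boundA : a * (Real.log a - Real.log b) - a + b
        ≤ ∑ x ∈ A, u * phi (N * P x) := by
      have hcpos : 0 < a / b := div_pos hapos hbpos
      have ht := tangent_sum hAS hP0 hcpos hcard
      rw [← hN, ← hu, ← ha, ← hb] at ht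
      have e : (A.card : ℝ) * u * phi (a / b)
          + Real.log (a / b) * (a - (a / b) * ((A.card : ℝ) * u))
          = a * (Real.log a - Real.log b) - a + b := by
        rw [← hb]
        clear_value a b
        have h6 : b * (a / b) = a := by
          rw [mul_comm, div_mul_cancel₀ a hbpos.ne']
        unfold phi
        rw [Real.log_div hapos.ne' hbpos.ne']
        linear_combination -h6
      rw [e] at ht
      exact ht
    rcases eq_or_lt_of_le ha1 with haone | halt
    · -- a = 1
      have hPz : ∀ x ∈ A', P x = 0 := by
        intro x hx
        have hsum0 : ∑ x ∈ A', P x = 0 := by rw [← haone] at hsplitP; linarith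
        have := (Finset.sum_eq_zero_iff_of_nonneg
          (fun x hx => hP0 x (hAS' hx))).1 hsum0
        exact this x hx
      have boundB : ∑ x ∈ A', u * phi (N * P x) = 1 - b := by
        have : ∀ x ∈ A', u * phi (N * P x) = u := by
          intro x hx
          rw [hPz x hx, mul_zero]
          unfold phi
          simp
        rw [Finset.sum_congr rfl this, Finset.sum_const, nsmul_eq_mul, hc']
      have boundA' : -Real.log b - 1 + b ≤ ∑ x ∈ A, u * phi (N * P x) := by
        have := boundA
        rw [haone] at this
        simpa using this
      have hD : -Real.log b ≤ ∑ x ∈ S, u * phi (N * P x) := by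
        rw [hsplitD, boundB]
        linarith [boundA']
      have hpp := pinsker_two_point_one hbpos (by linarith : b ≤ 1)
      rw [heta, haone]
      nlinarith [hpp, hD]
    · -- a < 1
      have boundB : (1 - a) * (Real.log (1 - a) - Real.log (1 - b))
          - (1 - a) + (1 - b) ≤ ∑ x ∈ A', u * phi (N * P x) := by
        have hb1 : b < 1 := by linarith
        have hcpos : 0 < (1 - a) / (1 - b) := div_pos (by linarith) (by linarith)
        have ht := tangent_sum hAS' hP0 hcpos hcard
        rw [← hN, ← hu, hc'] at ht
        have hPA' : ∑ x ∈ A', P x = 1 - a := by linarith [hsplitP]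
        rw [hPA'] at ht
        have e : (1 - b) * phi ((1 - a) / (1 - b))
            + Real.log ((1 - a) / (1 - b)) * ((1 - a) - ((1 - a) / (1 - b)) * (1 - b))
            = (1 - a) * (Real.log (1 - a) - Real.log (1 - b)) - (1 - a) + (1 - b) := by
          clear_value a b
          have h6 : (1 - b) * ((1 - a) / (1 - b)) = 1 - a := by
            rw [mul_comm, div_mul_cancel₀ _ (by linarith : (1:ℝ) - b ≠ 0)]
          unfold phi
          rw [Real.log_div (by linarith : (1:ℝ) - a ≠ 0) (by linarith : (1:ℝ) - b ≠ 0)]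
          linear_combination -h6
        rw [e] at ht
        exact ht
      have hD : a * (Real.log a - Real.log b)
          + (1 - a) * (Real.log (1 - a) - Real.log (1 - b))
          ≤ ∑ x ∈ S, u * phi (N * P x) := by
        rw [hsplitD]
        have := boundA
        have := boundB
        linarith
      have hpp := pinsker_two_point_lt hbpos hba.le halt
      rw [heta]
      nlinarith [hpp, hD]

/-- the KL sum equals log N minus entropy -/
lemma KL_eq (hne : S.Nonempty) {R : G → ℝ} (hR0 : ∀ x ∈ S, 0 ≤ R x)
    (hR1 : ∑ x ∈ S, R x = 1) :
    ∑ x ∈ S, ((S.card : ℝ))⁻¹ * phi ((S.card : ℝ) * R x)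
      = Real.log (S.card : ℝ) - ∑ x ∈ S, Real.negMulLog (R x) := by
  have hcard : (0:ℝ) < (S.card : ℝ) := by
    have := Finset.card_pos.2 hne; exact_mod_cast this
  set N : ℝ := (S.card : ℝ) with hN
  set u : ℝ := N⁻¹ with hu
  have huN : u * N = 1 := inv_mul_cancel₀ hcard.ne'
  have e : ∀ x ∈ S, u * phi (N * R x)
      = R x * Real.log N - Real.negMulLog (R x) - R x + u := by
    intro x hx
    rcases eq_or_lt_of_le (hR0 x hx) with h0 | h0
    · rw [← h0]
      unfold phi
      simp [Real.negMulLog]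
    · unfold phi
      rw [Real.log_mul hcard.ne' h0.ne']
      rw [Real.negMulLog]
      have : u * (N * R x * (Real.log N + Real.log (R x)) - N * R x + 1)
          = (u * N) * (R x * Real.log N) + (u * N) * (R x * Real.log (R x))
            - (u * N) * R x + u := by ring
      rw [this, huN]
      ring
  rw [Finset.sum_congr rfl e]
  rw [Finset.sum_add_distrib, Finset.sum_sub_distrib, Finset.sum_sub_distrib,
    Finset.sum_const, nsmul_eq_mul, ← Finset.sum_mul, hR1]
  have hcu : (S.card : ℝ) * u = 1 := by rw [← hN]; exact mul_inv_cancel₀ hcard.ne'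
  rw [hcu]
  ring

/-- main abstract inequality -/
lemma abstract_main (hsub : ∀ x ∈ S, ∀ y ∈ S, x - y ∈ S) (hne : S.Nonempty)
    (hP0 : ∀ x ∈ S, 0 ≤ P x) (hP1 : ∑ x ∈ S, P x = 1)
    {Q : G → ℝ} (hQ : ∀ s ∈ S, Q s = ∑ x ∈ S, P x * P (x - s))
    (hent : Real.log (S.card : ℝ) - 1/8 ≤ ∑ x ∈ S, Real.negMulLog (P x)) :
    Real.log (S.card : ℝ) - ∑ x ∈ S, Real.negMulLog (P x)
      ≤ 2 * ((∑ s ∈ S, Real.negMulLog (Q s)) - ∑ x ∈ S, Real.negMulLog (P x)) := by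
  have hcard : (0:ℝ) < (S.card : ℝ) := by
    have := Finset.card_pos.2 hne; exact_mod_cast this
  have hQ0 := Q_nonneg hsub hP0 hQ
  have hQ1 := Q_sum hsub hne hP1 hQ
  set DP : ℝ := ∑ x ∈ S, ((S.card : ℝ))⁻¹ * phi ((S.card : ℝ) * P x) with hDP
  set DQ : ℝ := ∑ s ∈ S, ((S.card : ℝ))⁻¹ * phi ((S.card : ℝ) * Q s) with hDQ
  set η : ℝ := ∑ x ∈ S, |P x - ((S.card : ℝ))⁻¹| with hη
  have hDP0 : 0 ≤ DP :=
    Finset.sum_nonneg fun x hx => mul_nonneg (inv_nonneg.2 hcard.le)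
      (phi_nonneg (mul_nonneg hcard.le (hP0 x hx)))
  have hDPeq : DP = Real.log (S.card : ℝ) - ∑ x ∈ S, Real.negMulLog (P x) :=
    KL_eq hne hP0 hP1
  have hDQeq : DQ = Real.log (S.card : ℝ) - ∑ s ∈ S, Real.negMulLog (Q s) :=
    KL_eq hne hQ0 hQ1
  have hDPsmall : DP ≤ 1/8 := by rw [hDPeq]; linarith [hent]
  have hpk : η^2 ≤ 2 * DP := pinsker hne hP0 hP1
  have hη0 : 0 ≤ η := Finset.sum_nonneg fun x _ => abs_nonneg _
  have hηhalf : η ≤ 1/2 := by nlinarith [hpk, hDPsmall, hη0]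
  have hcontr : DQ ≤ η * DP := KL_contract hsub hne hP0 hP1 hQ
  have : DQ ≤ DP / 2 := by nlinarith [hcontr, hDP0, hηhalf, hη0]
  linarith [hDPeq, hDQeq, this]

end core

lemma mapDomain_apply_sum {α β : Type*} [DecidableEq β] (f : α → β) (v : α →₀ ℝ) (b : β) :
    Finsupp.mapDomain f v b = ∑ x ∈ v.support, if f x = b then v x else 0 := by
  rw [Finsupp.mapDomain, Finsupp.sum_apply, Finsupp.sum]
  apply Finset.sum_congr rfl
  intro x hx
  rw [Finsupp.single_apply]

end S14


/-- Let `H` be a finite subgroup of an abelian group `G` (with underlying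
finite set `HS`), and let `X ~ p` be an `H`-valued random variable with
`H(X) ≥ log |H| - 1/8`. Then `log |H| - H(X) ≤ 2 d_ent(X, X)`. -/
theorem statement14 {G : Type*} [AddCommGroup G] (H : AddSubgroup G) (HS : Finset G)
    (hHS : (HS : Set G) = (H : Set G)) (p : G →₀ ℝ) (hp : IsPMF p)
    (hsupp : (p.support : Set G) ⊆ (H : Set G))
    (hent : Real.log (HS.card : ℝ) - 1 / 8 ≤ ent p) :
    Real.log (HS.card : ℝ) - ent p ≤ 2 * dEnt p p := by
  classical
  have hmem : ∀ x : G, x ∈ HS ↔ x ∈ H := by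
    intro x
    constructor
    · intro h
      have h2 : x ∈ (HS : Set G) := h
      rw [hHS] at h2
      exact h2
    · intro h
      have h2 : x ∈ (H : Set G) := h
      rw [← hHS] at h2
      exact h2
  have hsub : ∀ x ∈ HS, ∀ y ∈ HS, x - y ∈ HS := by
    intro x hx y hy
    exact (hmem _).2 (sub_mem ((hmem x).1 hx) ((hmem y).1 hy))
  have hne : HS.Nonempty := ⟨0, (hmem 0).2 (zero_mem H)⟩
  have hPsupp : p.support ⊆ HS := by
    intro x hx
    have h2 : (x:G) ∈ (p.support : Set G) := hx
    exact (hmem x).2 (hsupp h2)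
  have hp0 : ∀ x ∈ HS, 0 ≤ p x := fun x _ => hp.1 x
  have hp1 : ∑ x ∈ HS, p x = 1 := by
    rw [← Finset.sum_subset hPsupp (fun x _ hxs => Finsupp.notMem_support_iff.1 hxs)]
    exact hp.2
  -- the distribution of the difference
  have hprodsupp : (prodPMF p p).support ⊆ HS ×ˢ HS :=
    (Finsupp.support_onFinset_subset).trans (Finset.product_subset_product hPsupp hPsupp)
  have hQform : ∀ s ∈ HS, subDist p p s = ∑ x ∈ HS, p x * p (x - s) := by
    intro s hs
    rw [subDist, S14.mapDomain_apply_sum]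
    rw [Finset.sum_subset hprodsupp (fun z _ hz => by
      rw [Finsupp.notMem_support_iff.1 hz]
      split <;> rfl)]
    rw [Finset.sum_product]
    apply Finset.sum_congr rfl
    intro x hx
    have hcond : ∀ y : G, (x - y = s) = (y = x - s) := by
      intro y
      apply propext
      constructor
      · intro h; rw [← h]; abel
      · intro h; rw [h]; abel
    have hap : ∀ y : G, prodPMF p p (x, y) = p x * p y := fun y => rfl
    simp only [hcond, hap]
    rw [Finset.sum_ite_eq' HS (x - s) (fun y => p x * p y)]
    rw [if_pos (hsub x hx s hs)]
  have hQsupp : (subDist p p).support ⊆ HS := by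
    intro s hs
    rw [subDist] at hs
    have h2 := Finsupp.mapDomain_support hs
    rw [Finset.mem_image] at h2
    obtain ⟨z, hz, hzs⟩ := h2
    have hzmem := hprodsupp hz
    rw [Finset.mem_product] at hzmem
    rw [← hzs]
    exact hsub z.1 hzmem.1 z.2 hzmem.2
  have hentp : ent p = ∑ x ∈ HS, Real.negMulLog (p x) := by
    rw [ent]
    exact Finset.sum_subset hPsupp (fun x _ hxs => by
      rw [Finsupp.notMem_support_iff.1 hxs, Real.negMulLog_zero])
  have hentq : ent (subDist p p) = ∑ s ∈ HS, Real.negMulLog (subDist p p s) := by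
    rw [ent]
    exact Finset.sum_subset hQsupp (fun x _ hxs => by
      rw [Finsupp.notMem_support_iff.1 hxs, Real.negMulLog_zero])
  have habs := S14.abstract_main hsub hne hp0 hp1 hQform (by rw [← hentp]; exact hent)
  rw [← hentp, ← hentq] at habs
  rw [dEnt]
  linarith [habs]


end
end
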